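/- arXiv:1003.1362 — 6 statements merged into one kernel-verified Lean document; each statement's English description precedes it below -/
import Mathlib

section
/- Assume S is non-singular. Let z be real with 0 < z < 1/k and let x ∈ ℂ with |x| = 1 be such that a(x;z) ≠ 0. Then the two complex roots y₀, y₁ of the quadratic equation a(x;z)·Y² + b(x;z)·Y + c(x;z) = 0 satisfy min(|y₀|, |y₁|) < 1; moreover neither root has modulus equal to 1. -/
/-- `c(x;z) = z·Σ_{(i,−1)∈S} x^{i+1}`. -/
noncomputable def cpoly (S : Finset (ℤ × ℤ)) (x z : ℂ) : ℂ :=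
  z * ∑ p ∈ S.filter (fun p => p.2 = -1), x ^ (p.1 + 1)

/-- `a(x;z) = z·Σ_{(i,1)∈S} x^{i+1}`. -/
noncomputable def apoly (S : Finset (ℤ × ℤ)) (x z : ℂ) : ℂ :=
  z * ∑ p ∈ S.filter (fun p => p.2 = 1), x ^ (p.1 + 1)

/-- `b(x;z) = −1 + z·Σ_{(i,0)∈S} x^{i+1}`. -/
noncomputable def bpoly (S : Finset (ℤ × ℤ)) (x z : ℂ) : ℂ :=
  -1 + z * ∑ p ∈ S.filter (fun p => p.2 = 0), x ^ (p.1 + 1)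

/-- A step set is singular if it contains `(−1,1)` and `(1,−1)` and all its other
steps lie in `{(0,1),(1,1),(1,0)}`. -/
def IsSingular (S : Finset (ℤ × ℤ)) : Prop :=
  ((-1, 1) : ℤ × ℤ) ∈ S ∧ ((1, -1) : ℤ × ℤ) ∈ S ∧
    ∀ p ∈ S, p = ((-1, 1) : ℤ × ℤ) ∨ p = ((1, -1) : ℤ × ℤ) ∨
      p = ((0, 1) : ℤ × ℤ) ∨ p = ((1, 1) : ℤ × ℤ) ∨ p = ((1, 0) : ℤ × ℤ)

open Complex Finset


lemma deriv_alg (A y₀ y₁ Y : ℂ) (ha : A ≠ 0) (hY0 : Y ≠ 0) (hy00 : y₀ ≠ 0) (hy10 : y₁ ≠ 0)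
    (hYy0 : Y - y₀ ≠ 0) (hYy1 : Y - y₁ ≠ 0)
    (hs0 : 1 - Y / y₀ ≠ 0) (hs1 : 1 - Y / y₁ ≠ 0) :
    -(Y * I / y₀) / (1 - Y / y₀) + -(Y * I / y₁) / (1 - Y / y₁)
      - (-(((A * (Y * I) * (Y - y₁) + A * (Y - y₀) * (Y * I)) * Y
            - A * (Y - y₀) * (Y - y₁) * (Y * I)) / Y ^ 2)
          / -(A * (Y - y₀) * (Y - y₁) / Y)) + I = 2 * I := by
  have hne : A * (Y - y₀) * (Y - y₁) ≠ 0 := mul_ne_zero (mul_ne_zero ha hYy0) hYy1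
  have e0 : -(Y * I / y₀) / (1 - Y / y₀) = Y * I / (Y - y₀) := by
    rw [div_eq_div_iff hs0 hYy0]; field_simp; ring
  have e1 : -(Y * I / y₁) / (1 - Y / y₁) = Y * I / (Y - y₁) := by
    rw [div_eq_div_iff hs1 hYy1]; field_simp; ring
  have e2 : -(((A * (Y * I) * (Y - y₁) + A * (Y - y₀) * (Y * I)) * Y
            - A * (Y - y₀) * (Y - y₁) * (Y * I)) / Y ^ 2)
          / -(A * (Y - y₀) * (Y - y₁) / Y)
      = Y * I / (Y - y₀) + Y * I / (Y - y₁) - I := by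
    rw [neg_div_neg_eq, div_div_div_comm,
      show (Y:ℂ)^2/Y = Y from by field_simp [sq], div_div,
      eq_sub_iff_add_eq, div_add' _ _ _ (mul_ne_zero hne hY0),
      div_add_div _ _ hYy0 hYy1,
      div_eq_div_iff (mul_ne_zero hne hY0) (mul_ne_zero hYy0 hYy1)]
    ring
  rw [e0, e1, e2]; ring

/-- helper: `|w| < 1` implies `1 - w` lies in the slit plane and is nonzero. -/
lemma slit_helper' {w : ℂ} (h : ‖w‖ < 1) :
    (1 - w) ∈ Complex.slitPlane ∧ (1 - w) ≠ 0 := by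
  have hre : 0 < (1 - w).re := by
    have : w.re ≤ ‖w‖ := Complex.re_le_norm w
    simp only [Complex.sub_re, Complex.one_re]
    linarith
  refine ⟨Complex.mem_slitPlane_iff.2 (Or.inl hre), fun h0 => by simp [h0] at hre⟩

/-- For a non-singular walk, `0 < z < 1/k` real and `|x| = 1`, the two `y`-roots of the
kernel satisfy `min(|y₀|,|y₁|) < 1`, and neither root has modulus one. -/
theorem roots_of_kernel_on_unit_circle (S : Finset (ℤ × ℤ))
    (hS : S ⊆ ({-1, 0, 1} ×ˢ {-1, 0, 1} : Finset (ℤ × ℤ)) \ {((0 : ℤ), (0 : ℤ))})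
    (hk : 1 ≤ S.card) (hns : ¬ IsSingular S)
    (z : ℝ) (hz0 : 0 < z) (hz1 : z < 1 / (S.card : ℝ))
    (x : ℂ) (hx : ‖x‖ = 1) (ha : apoly S x (z : ℂ) ≠ 0)
    (y₀ y₁ : ℂ)
    (hroots : ∀ Y : ℂ,
      apoly S x (z : ℂ) * Y ^ 2 + bpoly S x (z : ℂ) * Y + cpoly S x (z : ℂ) =
        apoly S x (z : ℂ) * (Y - y₀) * (Y - y₁)) :
    min ‖y₀‖ ‖y₁‖ < 1 ∧
      ‖y₀‖ ≠ 1 ∧ ‖y₁‖ ≠ 1 := by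
  clear hns hS
  set A := apoly S x (z:ℂ) with hA
  set B := bpoly S x (z:ℂ) with hB
  set C := cpoly S x (z:ℂ) with hC
  have hkpos : (0:ℝ) < S.card := by exact_mod_cast hk
  have hzk : z * S.card < 1 := by
    rw [lt_div_iff₀ hkpos] at hz1; exact hz1
  -- the key estimate on the unit circle
  have hsum : ∀ j : ℤ, ‖∑ p ∈ S.filter (fun p => p.2 = j), x ^ (p.1 + 1)‖
      ≤ (S.filter (fun p => p.2 = j)).card := by
    intro j
    calc ‖∑ p ∈ S.filter (fun p => p.2 = j), x ^ (p.1 + 1)‖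
        ≤ ∑ p ∈ S.filter (fun p => p.2 = j), ‖x ^ (p.1 + 1)‖ :=
          norm_sum_le _ _
      _ = ∑ p ∈ S.filter (fun p => p.2 = j), 1 := by
          refine Finset.sum_congr rfl fun p _ => ?_
          rw [norm_zpow, hx, one_zpow]
      _ = (S.filter (fun p => p.2 = j)).card := by simp
  have hcards : ((S.filter (fun p => p.2 = 1)).card + (S.filter (fun p => p.2 = 0)).card
      + (S.filter (fun p => p.2 = -1)).card : ℝ) ≤ (S.card : ℝ) := by
    have hAB : Disjoint (S.filter (fun p => p.2 = 1)) (S.filter (fun p => p.2 = 0)) := by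
      rw [Finset.disjoint_left]; intro p hp hq
      simp only [Finset.mem_filter] at hp hq; omega
    have hABC : Disjoint (S.filter (fun p => p.2 = 1) ∪ S.filter (fun p => p.2 = 0))
        (S.filter (fun p => p.2 = -1)) := by
      rw [Finset.disjoint_left]; intro p hp hq
      simp only [Finset.mem_filter, Finset.mem_union] at hp hq; omega
    have : (S.filter (fun p => p.2 = 1)).card + (S.filter (fun p => p.2 = 0)).card
        + (S.filter (fun p => p.2 = -1)).card ≤ S.card := by
      calc _ = (S.filter (fun p => p.2 = 1) ∪ S.filter (fun p => p.2 = 0)).card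
            + (S.filter (fun p => p.2 = -1)).card := by
            rw [Finset.card_union_of_disjoint hAB]
        _ = (S.filter (fun p => p.2 = 1) ∪ S.filter (fun p => p.2 = 0)
            ∪ S.filter (fun p => p.2 = -1)).card := (Finset.card_union_of_disjoint hABC).symm
        _ ≤ S.card := Finset.card_le_card (by
            simp only [Finset.union_subset_iff]
            exact ⟨⟨Finset.filter_subset _ _, Finset.filter_subset _ _⟩,
              Finset.filter_subset _ _⟩)
    exact_mod_cast this
  have habs : ∀ Y : ℂ, ‖Y‖ = 1 →
      ‖A * Y ^ 2 + B * Y + C + Y‖ < 1 := by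
    intro Y hY
    have hid : A * Y ^ 2 + B * Y + C + Y =
        (z:ℂ) * (∑ p ∈ S.filter (fun p => p.2 = 1), x ^ (p.1 + 1)) * Y^2
        + (z:ℂ) * (∑ p ∈ S.filter (fun p => p.2 = 0), x ^ (p.1 + 1)) * Y
        + (z:ℂ) * (∑ p ∈ S.filter (fun p => p.2 = -1), x ^ (p.1 + 1)) := by
      rw [hA, hB, hC]; unfold apoly bpoly cpoly; ring
    rw [hid]
    have e1 : ∀ (j : ℤ) (W : ℂ), ‖W‖ = 1 →
        ‖(z:ℂ) * (∑ p ∈ S.filter (fun p => p.2 = j), x ^ (p.1 + 1)) * W‖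
          ≤ z * (S.filter (fun p => p.2 = j)).card := by
      intro j W hW
      rw [norm_mul, norm_mul, Complex.norm_real, Real.norm_eq_abs, abs_of_pos hz0, hW, mul_one]
      exact mul_le_mul_of_nonneg_left (hsum j) hz0.le
    calc ‖_‖ ≤ ‖(z:ℂ) * (∑ p ∈ S.filter (fun p => p.2 = 1), x ^ (p.1 + 1)) * Y^2‖
          + ‖(z:ℂ) * (∑ p ∈ S.filter (fun p => p.2 = 0), x ^ (p.1 + 1)) * Y‖
          + ‖(z:ℂ) * (∑ p ∈ S.filter (fun p => p.2 = -1), x ^ (p.1 + 1))‖ := by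
          refine le_trans (norm_add_le _ _) ?_
          gcongr
          exact norm_add_le _ _
      _ ≤ z * (S.filter (fun p => p.2 = 1)).card + z * (S.filter (fun p => p.2 = 0)).card
          + z * (S.filter (fun p => p.2 = -1)).card := by
          gcongr
          · exact e1 1 (Y^2) (by rw [norm_pow, hY, one_pow])
          · exact e1 0 Y hY
          · simpa using e1 (-1) 1 (by simp)
      _ = z * ((S.filter (fun p => p.2 = 1)).card + (S.filter (fun p => p.2 = 0)).card
          + (S.filter (fun p => p.2 = -1)).card) := by ring
      _ ≤ z * S.card := by
          exact mul_le_mul_of_nonneg_left hcards hz0.le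
      _ < 1 := hzk
  -- no root on the unit circle
  have hnoroot : ∀ w : ℂ, ‖w‖ = 1 → A * w ^ 2 + B * w + C ≠ 0 := by
    intro w hw h0
    have := habs w hw
    rw [h0, zero_add, hw] at this
    exact absurd this (by norm_num)
  have hy0ne : ‖y₀‖ ≠ 1 := by
    intro h
    exact hnoroot y₀ h (by rw [hroots y₀]; ring_nf)
  have hy1ne : ‖y₁‖ ≠ 1 := by
    intro h
    exact hnoroot y₁ h (by rw [hroots y₁]; ring_nf)
  refine ⟨?_, hy0ne, hy1ne⟩
  by_contra hmin
  push_neg at hmin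
  have h0 : 1 < ‖y₀‖ :=
    lt_of_le_of_ne (le_trans hmin (min_le_left _ _)) (Ne.symm hy0ne)
  have h1 : 1 < ‖y₁‖ :=
    lt_of_le_of_ne (le_trans hmin (min_le_right _ _)) (Ne.symm hy1ne)
  have hy00 : y₀ ≠ 0 := by
    intro h; rw [h] at h0; simp at h0; linarith
  have hy10 : y₁ ≠ 0 := by
    intro h; rw [h] at h1; simp at h1; linarith
  -- facts about exp on the circle
  have hYabs : ∀ θ : ℝ, ‖Complex.exp ((θ:ℂ) * Complex.I)‖ = 1 :=
    fun θ => Complex.norm_exp_ofReal_mul_I θ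
  have hYne : ∀ θ : ℝ, Complex.exp ((θ:ℂ) * Complex.I) ≠ 0 := fun θ => Complex.exp_ne_zero _
  have hYd : ∀ θ : ℝ, HasDerivAt (fun θ : ℝ => Complex.exp ((θ:ℂ) * Complex.I))
      (Complex.exp ((θ:ℂ) * Complex.I) * Complex.I) θ := by
    intro θ
    exact (by simpa using (Complex.ofRealCLM.hasDerivAt.mul_const Complex.I) :
      HasDerivAt (fun θ : ℝ => (θ:ℂ) * Complex.I) Complex.I θ).cexp
  have hlin : ∀ θ : ℝ, HasDerivAt (fun θ : ℝ => (θ:ℂ) * Complex.I) Complex.I θ := by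
    intro θ; simpa using (Complex.ofRealCLM.hasDerivAt.mul_const Complex.I)
  -- the global derivative identity
  have hG : ∀ θ : ℝ, HasDerivAt (fun t : ℝ =>
      Complex.log (1 - Complex.exp ((t:ℂ) * Complex.I) / y₀)
      + Complex.log (1 - Complex.exp ((t:ℂ) * Complex.I) / y₁)
      - Complex.log (-(A * (Complex.exp ((t:ℂ) * Complex.I) - y₀)
          * (Complex.exp ((t:ℂ) * Complex.I) - y₁) / Complex.exp ((t:ℂ) * Complex.I)))
      + (t:ℂ) * Complex.I) (2 * Complex.I) θ := by
    intro θ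
    set Y := Complex.exp ((θ:ℂ) * Complex.I) with hYdef
    have hYa : ‖Y‖ = 1 := hYabs θ
    have hY0 : Y ≠ 0 := hYne θ
    have hYy0 : Y - y₀ ≠ 0 := by
      intro h
      have : Y = y₀ := by linear_combination h
      rw [this] at hYa; exact hy0ne (by rw [← hYa])
    have hYy1 : Y - y₁ ≠ 0 := by
      intro h
      have : Y = y₁ := by linear_combination h
      rw [this] at hYa; exact hy1ne (by rw [← hYa])
    have hs0 := slit_helper' (w := Y / y₀) (by
      rw [norm_div, hYa]
      rw [div_lt_one (by positivity)]; exact h0)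
    have hs1 := slit_helper' (w := Y / y₁) (by
      rw [norm_div, hYa]
      rw [div_lt_one (by positivity)]; exact h1)
    -- v and its slit-plane property
    have hvval : 1 - (-(A * (Y - y₀) * (Y - y₁) / Y)) = (A * Y ^ 2 + B * Y + C + Y) / Y := by
      rw [hroots Y]; field_simp; ring
    have hvabs : ‖1 - (-(A * (Y - y₀) * (Y - y₁) / Y))‖ < 1 := by
      rw [hvval, norm_div, hYa, div_one]; exact habs Y hYa
    have hsv := slit_helper' hvabs
    rw [sub_sub_cancel] at hsv
    -- derivatives
    have h1d : HasDerivAt (fun t : ℝ => 1 - Complex.exp ((t:ℂ) * Complex.I) / y₀)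
        (-(Y * Complex.I / y₀)) θ := ((hYd θ).div_const y₀).const_sub 1
    have h2d : HasDerivAt (fun t : ℝ => 1 - Complex.exp ((t:ℂ) * Complex.I) / y₁)
        (-(Y * Complex.I / y₁)) θ := ((hYd θ).div_const y₁).const_sub 1
    have L0 := h1d.clog_real hs0.1
    have L1 := h2d.clog_real hs1.1
    have hnum : HasDerivAt (fun t : ℝ => A * (Complex.exp ((t:ℂ) * Complex.I) - y₀)
        * (Complex.exp ((t:ℂ) * Complex.I) - y₁))
        (A * (Y * Complex.I) * (Y - y₁) + A * (Y - y₀) * (Y * Complex.I)) θ :=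
      (((hYd θ).sub_const y₀).const_mul A).mul ((hYd θ).sub_const y₁)
    have hv := (hnum.div (hYd θ) hY0).neg
    have Lv := hv.clog_real hsv.1
    have hfinal := ((L0.add L1).sub Lv).add (hlin θ)
    exact hfinal.congr_deriv (deriv_alg A y₀ y₁ Y ha hY0 hy00 hy10 hYy0 hYy1 hs0.2 hs1.2)
  -- FTC over [0, 2π]
  have key := intervalIntegral.integral_eq_sub_of_hasDerivAt
    (f' := fun _ : ℝ => 2 * Complex.I) (a := 0) (b := 2 * Real.pi)
    (fun t _ => hG t) intervalIntegrable_const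
  rw [intervalIntegral.integral_const] at key
  have hY2 : Complex.exp (((2 * Real.pi : ℝ):ℂ) * Complex.I) = 1 := by
    push_cast; exact Complex.exp_two_pi_mul_I
  have hYz : Complex.exp (((0 : ℝ):ℂ) * Complex.I) = 1 := by simp
  simp only [hY2, hYz] at key
  rw [Complex.real_smul] at key
  have hpi : (Real.pi : ℂ) = 0 := by
    push_cast at key
    linear_combination (-Complex.I / 2) * key + (Real.pi:ℂ) * Complex.I_sq
  exact absurd hpi (Complex.ofReal_ne_zero.2 Real.pi_ne_zero)
end

section
/- For every complex x, y, z with |x| ≤ 1, |y| ≤ 1, |z| < 1/k and K(x,y;z) = 0, one has c(x;z)·Q(x,0;z) + c̃(y;z)·Q(0,y;z) − z·δ·Q(0,0;z) = x·y. -/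
/-- Number of walks of length `n` in the quarter plane, starting at `(0,0)`,
ending at `(i,j)`, with steps in `S`. -/
def walkCount (S : Finset (ℤ × ℤ)) (i j : ℤ) (n : ℕ) : ℕ :=
  Finset.card (Finset.univ.filter (fun s : Fin n → {p : ℤ × ℤ // p ∈ S} =>
    (∀ l : Fin n,
        0 ≤ (∑ m ∈ Finset.univ.filter (fun m => m ≤ l), ((s m : ℤ × ℤ)).1) ∧
        0 ≤ (∑ m ∈ Finset.univ.filter (fun m => m ≤ l), ((s m : ℤ × ℤ)).2)) ∧
    (∑ m : Fin n, (s m : ℤ × ℤ)) = (i, j)))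

/-- The trivariate generating function `Q(x,y;z)` of the walks. -/
noncomputable def genF (S : Finset (ℤ × ℤ)) (x y z : ℂ) : ℂ :=
  ∑' p : ℕ × ℕ × ℕ,
    (walkCount S (p.1 : ℤ) (p.2.1 : ℤ) p.2.2 : ℂ) * x ^ p.1 * y ^ p.2.1 * z ^ p.2.2

open Finset
namespace QWaux

variable {S : Finset (ℤ × ℤ)}
abbrev Stp (S : Finset (ℤ × ℤ)) := {p : ℤ × ℤ // p ∈ S}
def ept {n : ℕ} (s : Fin n → Stp S) : ℤ × ℤ := ∑ m, (s m : ℤ × ℤ)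
def okP {n : ℕ} (s : Fin n → Stp S) : Prop :=
  ∀ l : Fin n,
    0 ≤ (∑ m ∈ Finset.univ.filter (fun m => m ≤ l), ((s m : ℤ × ℤ)).1) ∧
    0 ≤ (∑ m ∈ Finset.univ.filter (fun m => m ≤ l), ((s m : ℤ × ℤ)).2)

lemma filter_le_castSucc {n : ℕ} (l : Fin n) :
    (Finset.univ.filter (fun m => m ≤ l.castSucc) : Finset (Fin (n+1)))
      = (Finset.univ.filter (fun m => m ≤ l)).map Fin.castSuccEmb := by
  ext m
  simp only [Finset.mem_filter, Finset.mem_univ, true_and, Finset.mem_map]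
  constructor
  · intro hm
    have hne : m ≠ Fin.last n := ne_of_lt (lt_of_le_of_lt hm (Fin.castSucc_lt_last l))
    obtain ⟨m', hm'⟩ := Fin.exists_castSucc_eq.mpr hne
    refine ⟨m', ?_, ?_⟩
    · rw [← hm'] at hm
      exact (Fin.castSucc_le_castSucc_iff).mp hm
    · exact hm'
  · rintro ⟨m', hm', rfl⟩
    have : Fin.castSuccEmb m' = m'.castSucc := rfl
    rw [this]
    exact (Fin.castSucc_le_castSucc_iff).mpr hm'


lemma ept_fst {n : ℕ} (t : Fin n → Stp S) : (ept t).1 = ∑ m, ((t m : ℤ × ℤ)).1 := by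
  unfold ept; exact Prod.fst_sum

lemma ept_snd {n : ℕ} (t : Fin n → Stp S) : (ept t).2 = ∑ m, ((t m : ℤ × ℤ)).2 := by
  unfold ept; exact Prod.snd_sum

lemma ept_snoc {n : ℕ} (t : Fin n → Stp S) (a : Stp S) :
    ept (Fin.snoc t a) = ept t + (a : ℤ × ℤ) := by
  unfold ept
  rw [Fin.sum_univ_castSucc]
  simp

lemma okP_snoc {n : ℕ} (t : Fin n → Stp S) (a : Stp S) :
    okP (Fin.snoc t a) ↔
      okP t ∧ (0 ≤ (ept t).1 + (a : ℤ × ℤ).1 ∧ 0 ≤ (ept t).2 + (a : ℤ × ℤ).2) := by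
  unfold okP
  rw [Fin.forall_fin_succ']
  have hcs : ∀ (l : Fin n) (f : ℤ × ℤ → ℤ),
      (∑ m ∈ Finset.univ.filter (fun m => m ≤ l.castSucc), f (((Fin.snoc t a : Fin (n+1) → Stp S) m : ℤ × ℤ)))
        = ∑ m ∈ Finset.univ.filter (fun m => m ≤ l), f ((t m : ℤ × ℤ)) := by
    intro l f
    rw [filter_le_castSucc, Finset.sum_map]
    refine Finset.sum_congr rfl (fun m _ => ?_)
    have : (Fin.castSuccEmb m : Fin (n+1)) = m.castSucc := rfl
    rw [this]; congr 1; rw [Fin.snoc_castSucc]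
  have hlast : ∀ f : ℤ × ℤ → ℤ,
      (∑ m ∈ Finset.univ.filter (fun m => m ≤ Fin.last n), f (((Fin.snoc t a : Fin (n+1) → Stp S) m : ℤ × ℤ)))
        = (∑ m, f ((t m : ℤ × ℤ))) + f (a : ℤ × ℤ) := by
    intro f
    have hfil : (Finset.univ.filter (fun k => k ≤ Fin.last n)) = (Finset.univ : Finset (Fin (n+1))) := by
      ext k; simp [Fin.le_last]
    rw [hfil, Fin.sum_univ_castSucc]
    simp
  constructor
  · rintro ⟨h1, h2⟩
    refine ⟨fun l => ?_, ?_, ?_⟩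
    · have := h1 l
      rwa [hcs l Prod.fst, hcs l Prod.snd] at this
    · have := h2.1
      rw [ept_fst]; rwa [hlast Prod.fst] at this
    · have := h2.2
      rw [ept_snd]; rwa [hlast Prod.snd] at this
  · rintro ⟨h1, h2, h3⟩
    refine ⟨fun l => ?_, ?_, ?_⟩
    · rw [hcs l Prod.fst, hcs l Prod.snd]; exact h1 l
    · rw [hlast Prod.fst]; rw [ept_fst] at h2; exact h2
    · rw [hlast Prod.snd]; rw [ept_snd] at h3; exact h3

instance {n : ℕ} : DecidablePred (@okP S n) := fun s => by unfold okP; infer_instance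

def walks (S : Finset (ℤ × ℤ)) (n : ℕ) : Finset (Fin n → Stp S) :=
  Finset.univ.filter okP

noncomputable def A (S : Finset (ℤ × ℤ)) (n : ℕ) (x y : ℂ) : ℂ :=
  ∑ s ∈ walks S n, x ^ (ept s).1.toNat * y ^ (ept s).2.toNat


lemma zpow_toNat (x : ℂ) {a : ℤ} (h : 0 ≤ a) : x ^ a = x ^ a.toNat := by
  rw [← zpow_natCast, Int.toNat_of_nonneg h]

lemma step_bd (hS : S ⊆ ({-1, 0, 1} ×ˢ {-1, 0, 1} : Finset (ℤ × ℤ)) \ {((0 : ℤ), (0 : ℤ))})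
    {p : ℤ × ℤ} (hp : p ∈ S) : (-1 ≤ p.1 ∧ p.1 ≤ 1) ∧ (-1 ≤ p.2 ∧ p.2 ≤ 1) := by
  have := hS hp
  simp only [Finset.mem_sdiff, Finset.mem_product, Finset.mem_insert, Finset.mem_singleton] at this
  obtain ⟨⟨h1, h2⟩, _⟩ := this
  refine ⟨?_, ?_⟩ <;> [rcases h1 with h|h|h; rcases h2 with h|h|h] <;> omega

lemma ept_le (hS : S ⊆ ({-1, 0, 1} ×ˢ {-1, 0, 1} : Finset (ℤ × ℤ)) \ {((0 : ℤ), (0 : ℤ))})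
    {n : ℕ} (s : Fin n → Stp S) :
    (ept s).1 ≤ n ∧ (ept s).2 ≤ n := by
  constructor
  · rw [ept_fst]
    calc (∑ m : Fin n, ((s m : ℤ × ℤ)).1) ≤ ∑ m : Fin n, (1 : ℤ) :=
          Finset.sum_le_sum (fun m _ => (step_bd hS (s m).2).1.2)
    _ = n := by simp
  · rw [ept_snd]
    calc (∑ m : Fin n, ((s m : ℤ × ℤ)).2) ≤ ∑ m : Fin n, (1 : ℤ) :=
          Finset.sum_le_sum (fun m _ => (step_bd hS (s m).2).2.2)
    _ = n := by simp

lemma mem_walks {n : ℕ} {s : Fin n → Stp S} : s ∈ walks S n ↔ okP s := by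
  simp [walks]

lemma ept_nonneg {n : ℕ} {s : Fin n → Stp S} (h : okP s) :
    0 ≤ (ept s).1 ∧ 0 ≤ (ept s).2 := by
  cases n with
  | zero => simp [ept]
  | succ m =>
      have hfil : (Finset.univ.filter (fun k => k ≤ Fin.last m)) = (Finset.univ : Finset (Fin (m+1))) := by
        ext k; simp [Fin.le_last]
      have := h (Fin.last m)
      rw [hfil] at this
      constructor
      · rw [ept_fst]; exact this.1
      · rw [ept_snd]; exact this.2

/-- Decomposition of walks of length `n+1` by their last step. -/
lemma A_succ (n : ℕ) (x y : ℂ) :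
    x * y * A S (n+1) x y
      = ∑ a : Stp S, ∑ t ∈ (walks S n).filter
          (fun t => 0 ≤ (ept t).1 + (a : ℤ × ℤ).1 ∧ 0 ≤ (ept t).2 + (a : ℤ × ℤ).2),
          x ^ ((ept t).1 + (a : ℤ × ℤ).1 + 1).toNat
            * y ^ ((ept t).2 + (a : ℤ × ℤ).2 + 1).toNat := by
  classical
  have step1 : x * y * A S (n+1) x y
      = ∑ s ∈ walks S (n+1), x ^ ((ept s).1 + 1).toNat * y ^ ((ept s).2 + 1).toNat := by
    rw [A, Finset.mul_sum]
    refine Finset.sum_congr rfl (fun s hs => ?_)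
    have h := ept_nonneg (mem_walks.mp hs)
    have h1 : ((ept s).1 + 1).toNat = (ept s).1.toNat + 1 := by omega
    have h2 : ((ept s).2 + 1).toNat = (ept s).2.toNat + 1 := by omega
    rw [h1, h2, pow_succ, pow_succ]; ring
  rw [step1]
  have step2 : ∑ s ∈ walks S (n+1), x ^ ((ept s).1 + 1).toNat * y ^ ((ept s).2 + 1).toNat
      = ∑ q ∈ (Finset.univ.filter (fun q : (Fin n → Stp S) × Stp S =>
          okP q.1 ∧ 0 ≤ (ept q.1).1 + (q.2 : ℤ × ℤ).1 ∧ 0 ≤ (ept q.1).2 + (q.2 : ℤ × ℤ).2)),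
          x ^ ((ept q.1).1 + (q.2 : ℤ × ℤ).1 + 1).toNat
            * y ^ ((ept q.1).2 + (q.2 : ℤ × ℤ).2 + 1).toNat := by
    refine Finset.sum_nbij' (fun s => (Fin.init s, s (Fin.last n)))
      (fun q => Fin.snoc q.1 q.2) ?_ ?_ ?_ ?_ ?_
    · intro s hs
      rw [mem_walks] at hs
      have hs' : okP (Fin.snoc (Fin.init s) (s (Fin.last n))) := by
        rwa [Fin.snoc_init_self]
      rw [okP_snoc] at hs'
      simp only [Finset.mem_filter, Finset.mem_univ, true_and]
      exact ⟨hs'.1, hs'.2⟩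
    · intro q hq
      simp only [Finset.mem_filter, Finset.mem_univ, true_and] at hq
      rw [mem_walks, okP_snoc]
      exact ⟨hq.1, hq.2⟩
    · intro s _; exact Fin.snoc_init_self s
    · intro q _
      simp [Fin.init_snoc, Fin.snoc_last]
    · intro s hs
      have : ept s = ept (Fin.init s) + (s (Fin.last n) : ℤ × ℤ) := by
        rw [← ept_snoc, Fin.snoc_init_self]
      rw [this]
      simp [Prod.fst_add, Prod.snd_add]
  rw [step2]
  rw [Finset.sum_filter, Fintype.sum_prod_type_right]
  refine Finset.sum_congr rfl (fun a _ => ?_)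
  rw [Finset.sum_filter, walks, Finset.sum_filter]
  refine Finset.sum_congr rfl (fun t _ => ?_)
  by_cases h1 : okP t <;> by_cases h2 : (0 ≤ (ept t).1 + (a : ℤ × ℤ).1 ∧ 0 ≤ (ept t).2 + (a : ℤ × ℤ).2) <;>
    simp [h1, h2]

lemma A_0y (n : ℕ) (y : ℂ) :
    A S n 0 y = ∑ t ∈ walks S n, (if (ept t).1 = 0 then y ^ (ept t).2.toNat else 0) := by
  refine Finset.sum_congr rfl (fun t ht => ?_)
  have h := ept_nonneg (mem_walks.mp ht)
  by_cases h1 : (ept t).1 = 0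
  · have : (ept t).1.toNat = 0 := by omega
    simp [h1, this]
  · have : (ept t).1.toNat ≠ 0 := by omega
    simp [h1, zero_pow this]

lemma A_x0 (n : ℕ) (x : ℂ) :
    A S n x 0 = ∑ t ∈ walks S n, (if (ept t).2 = 0 then x ^ (ept t).1.toNat else 0) := by
  refine Finset.sum_congr rfl (fun t ht => ?_)
  have h := ept_nonneg (mem_walks.mp ht)
  by_cases h2 : (ept t).2 = 0
  · have : (ept t).2.toNat = 0 := by omega
    simp [h2, this]
  · have : (ept t).2.toNat ≠ 0 := by omega
    simp [h2, zero_pow this]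

lemma A_00 (n : ℕ) :
    A S n 0 0 = ∑ t ∈ walks S n, (if (ept t).1 = 0 ∧ (ept t).2 = 0 then (1 : ℂ) else 0) := by
  refine Finset.sum_congr rfl (fun t ht => ?_)
  have h := ept_nonneg (mem_walks.mp ht)
  by_cases h1 : (ept t).1 = 0 <;> by_cases h2 : (ept t).2 = 0
  · have e1 : (ept t).1.toNat = 0 := by omega
    have e2 : (ept t).2.toNat = 0 := by omega
    simp [h1, h2, e1, e2]
  · have : (ept t).2.toNat ≠ 0 := by omega
    simp [h1, h2, zero_pow this]
  · have : (ept t).1.toNat ≠ 0 := by omega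
    simp [h1, h2, zero_pow this]
  · have : (ept t).1.toNat ≠ 0 := by omega
    simp [h1, h2, zero_pow this]

/-- The inner sum in `A_succ`, evaluated. -/
lemma inner_eval (hS : S ⊆ ({-1, 0, 1} ×ˢ {-1, 0, 1} : Finset (ℤ × ℤ)) \ {((0 : ℤ), (0 : ℤ))})
    (n : ℕ) (x y : ℂ) (a : Stp S) :
    (∑ t ∈ (walks S n).filter
        (fun t => 0 ≤ (ept t).1 + (a : ℤ × ℤ).1 ∧ 0 ≤ (ept t).2 + (a : ℤ × ℤ).2),
        x ^ ((ept t).1 + (a : ℤ × ℤ).1 + 1).toNat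
          * y ^ ((ept t).2 + (a : ℤ × ℤ).2 + 1).toNat)
      = x ^ ((a : ℤ × ℤ).1 + 1).toNat * y ^ ((a : ℤ × ℤ).2 + 1).toNat * A S n x y
        - (if (a : ℤ × ℤ).1 = -1 then y ^ ((a : ℤ × ℤ).2 + 1).toNat * A S n 0 y else 0)
        - (if (a : ℤ × ℤ).2 = -1 then x ^ ((a : ℤ × ℤ).1 + 1).toNat * A S n x 0 else 0)
        + (if (a : ℤ × ℤ).1 = -1 ∧ (a : ℤ × ℤ).2 = -1 then A S n 0 0 else 0) := by
  classical
  obtain ⟨⟨ha1, ha1'⟩, ⟨ha2, ha2'⟩⟩ := step_bd hS a.2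
  set a1 := (a : ℤ × ℤ).1 with ha1def
  set a2 := (a : ℤ × ℤ).2 with ha2def
  set g : (Fin n → Stp S) → ℂ :=
    fun t => x ^ ((ept t).1 + a1 + 1).toNat * y ^ ((ept t).2 + a2 + 1).toNat with hg
  rw [Finset.sum_filter]
  have key : ∀ t ∈ walks S n,
      (if 0 ≤ (ept t).1 + a1 ∧ 0 ≤ (ept t).2 + a2 then g t else 0)
        = g t - (if a1 = -1 ∧ (ept t).1 = 0 then g t else 0)
            - (if a2 = -1 ∧ (ept t).2 = 0 then g t else 0)
            + (if (a1 = -1 ∧ (ept t).1 = 0) ∧ (a2 = -1 ∧ (ept t).2 = 0) then g t else 0) := by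
    intro t ht
    have he := ept_nonneg (mem_walks.mp ht)
    by_cases hp : a1 = -1 ∧ (ept t).1 = 0 <;> by_cases hq : a2 = -1 ∧ (ept t).2 = 0
    · have hc : ¬ (0 ≤ (ept t).1 + a1 ∧ 0 ≤ (ept t).2 + a2) := by omega
      simp [hp, hq, hc]
    · have hc : ¬ (0 ≤ (ept t).1 + a1 ∧ 0 ≤ (ept t).2 + a2) := by omega
      simp [hp, hq, hc]
    · have hc : ¬ (0 ≤ (ept t).1 + a1 ∧ 0 ≤ (ept t).2 + a2) := by omega
      simp [hp, hq, hc]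
    · have hc : (0 ≤ (ept t).1 + a1 ∧ 0 ≤ (ept t).2 + a2) := by omega
      simp [hp, hq, hc]
  rw [Finset.sum_congr rfl key]
  rw [Finset.sum_add_distrib, Finset.sum_sub_distrib, Finset.sum_sub_distrib]
  congr 1
  · congr 1
    · congr 1
      -- main term
      · rw [A, Finset.mul_sum]
        refine Finset.sum_congr rfl (fun t ht => ?_)
        have he := ept_nonneg (mem_walks.mp ht)
        have e1 : ((ept t).1 + a1 + 1).toNat = (a1 + 1).toNat + (ept t).1.toNat := by omega
        have e2 : ((ept t).2 + a2 + 1).toNat = (a2 + 1).toNat + (ept t).2.toNat := by omega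
        rw [hg]
        simp only []
        rw [e1, e2, pow_add, pow_add]
        ring
      -- first boundary term
      · by_cases hA : a1 = -1
        · rw [if_pos hA, A_0y, Finset.mul_sum]
          refine Finset.sum_congr rfl (fun t ht => ?_)
          have he := ept_nonneg (mem_walks.mp ht)
          by_cases h1 : (ept t).1 = 0
          · rw [if_pos ⟨hA, h1⟩, if_pos h1, hg]
            simp only []
            have e1 : ((ept t).1 + a1 + 1).toNat = 0 := by omega
            have e2 : ((ept t).2 + a2 + 1).toNat = (a2 + 1).toNat + (ept t).2.toNat := by omega
            rw [e1, e2, pow_add, pow_zero]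
            ring
          · rw [if_neg (fun h => h1 h.2), if_neg h1, mul_zero]
        · rw [if_neg hA]
          refine Finset.sum_eq_zero (fun t _ => if_neg (fun h => hA h.1))
    -- second boundary term
    · by_cases hA : a2 = -1
      · rw [if_pos hA, A_x0, Finset.mul_sum]
        refine Finset.sum_congr rfl (fun t ht => ?_)
        have he := ept_nonneg (mem_walks.mp ht)
        by_cases h2 : (ept t).2 = 0
        · rw [if_pos ⟨hA, h2⟩, if_pos h2, hg]
          simp only []
          have e2 : ((ept t).2 + a2 + 1).toNat = 0 := by omega
          have e1 : ((ept t).1 + a1 + 1).toNat = (a1 + 1).toNat + (ept t).1.toNat := by omega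
          rw [e2, e1, pow_add, pow_zero]
          ring
        · rw [if_neg (fun h => h2 h.2), if_neg h2, mul_zero]
      · rw [if_neg hA]
        refine Finset.sum_eq_zero (fun t _ => if_neg (fun h => hA h.1))
  -- corner term
  · by_cases hA : a1 = -1 ∧ a2 = -1
    · rw [if_pos hA, A_00]
      refine Finset.sum_congr rfl (fun t ht => ?_)
      have he := ept_nonneg (mem_walks.mp ht)
      by_cases h12 : (ept t).1 = 0 ∧ (ept t).2 = 0
      · rw [if_pos ⟨⟨hA.1, h12.1⟩, ⟨hA.2, h12.2⟩⟩, if_pos h12, hg]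
        simp only []
        have e1 : ((ept t).1 + a1 + 1).toNat = 0 := by omega
        have e2 : ((ept t).2 + a2 + 1).toNat = 0 := by omega
        rw [e1, e2, pow_zero, pow_zero, mul_one]
      · rw [if_neg (fun h => h12 ⟨h.1.2, h.2.2⟩), if_neg h12]
    · rw [if_neg hA]
      refine Finset.sum_eq_zero (fun t _ => if_neg (fun h => hA ⟨h.1.1, h.2.1⟩))


/-- The fundamental recursion for the polynomials `A n`. -/
lemma A_rec (hS : S ⊆ ({-1, 0, 1} ×ˢ {-1, 0, 1} : Finset (ℤ × ℤ)) \ {((0 : ℤ), (0 : ℤ))})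
    (n : ℕ) (x y : ℂ) :
    x * y * A S (n+1) x y
      = (∑ p ∈ S, x ^ (p.1 + 1).toNat * y ^ (p.2 + 1).toNat) * A S n x y
        - (∑ p ∈ S.filter (fun p => p.1 = -1), y ^ (p.2 + 1).toNat) * A S n 0 y
        - (∑ p ∈ S.filter (fun p => p.2 = -1), x ^ (p.1 + 1).toNat) * A S n x 0
        + (if ((-1, -1) : ℤ × ℤ) ∈ S then 1 else 0) * A S n 0 0 := by
  classical
  rw [A_succ]
  have : ∀ a : Stp S, (∑ t ∈ (walks S n).filter
          (fun t => 0 ≤ (ept t).1 + (a : ℤ × ℤ).1 ∧ 0 ≤ (ept t).2 + (a : ℤ × ℤ).2),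
          x ^ ((ept t).1 + (a : ℤ × ℤ).1 + 1).toNat
            * y ^ ((ept t).2 + (a : ℤ × ℤ).2 + 1).toNat)
      = x ^ ((a : ℤ × ℤ).1 + 1).toNat * y ^ ((a : ℤ × ℤ).2 + 1).toNat * A S n x y
        - (if (a : ℤ × ℤ).1 = -1 then y ^ ((a : ℤ × ℤ).2 + 1).toNat * A S n 0 y else 0)
        - (if (a : ℤ × ℤ).2 = -1 then x ^ ((a : ℤ × ℤ).1 + 1).toNat * A S n x 0 else 0)
        + (if (a : ℤ × ℤ).1 = -1 ∧ (a : ℤ × ℤ).2 = -1 then A S n 0 0 else 0) :=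
    inner_eval hS n x y
  rw [Finset.sum_congr rfl (fun a _ => this a)]
  rw [Finset.sum_add_distrib, Finset.sum_sub_distrib, Finset.sum_sub_distrib]
  have hcoe : ∀ F : ℤ × ℤ → ℂ, (∑ a : Stp S, F (a : ℤ × ℤ)) = ∑ p ∈ S, F p := by
    intro F
    exact Finset.sum_coe_sort S F
  congr 1
  · congr 1
    · congr 1
      · rw [hcoe (fun p => x ^ (p.1 + 1).toNat * y ^ (p.2 + 1).toNat * A S n x y),
          ← Finset.sum_mul]
      · rw [hcoe (fun p => if p.1 = -1 then y ^ (p.2 + 1).toNat * A S n 0 y else 0),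
          ← Finset.sum_filter, ← Finset.sum_mul]
    · rw [hcoe (fun p => if p.2 = -1 then x ^ (p.1 + 1).toNat * A S n x 0 else 0),
        ← Finset.sum_filter, ← Finset.sum_mul]
  · rw [hcoe (fun p => if p.1 = -1 ∧ p.2 = -1 then A S n 0 0 else 0)]
    have : ∀ p ∈ S, (if p.1 = -1 ∧ p.2 = -1 then A S n 0 0 else 0)
        = if p = ((-1 : ℤ), (-1 : ℤ)) then A S n 0 0 else 0 := by
      intro p _
      congr 1
      simp [Prod.ext_iff]
    rw [Finset.sum_congr rfl this, Finset.sum_ite_eq' S ((-1 : ℤ), (-1 : ℤ)) (fun _ => A S n 0 0)]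
    by_cases hm : ((-1, -1) : ℤ × ℤ) ∈ S <;> simp [hm]


lemma A_zero (x y : ℂ) : A S 0 x y = 1 := by
  have hw : walks S 0 = Finset.univ := by
    rw [walks]
    refine Finset.filter_true_of_mem (fun s _ => ?_)
    intro l; exact absurd l.2 (by omega)
  rw [A, hw]
  have : (ept (S := S) (Fin.elim0)) = 0 := by simp [ept]
  rw [Finset.sum_eq_single_of_mem (Fin.elim0) (Finset.mem_univ _)]
  · rw [this]; simp
  · intro b _ hb
    exact absurd (funext (fun l => l.elim0)) hb

lemma card_walks_le : ((walks S n).card : ℝ) ≤ (S.card : ℝ) ^ n := by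
  have h1 : (walks S n).card ≤ (Finset.univ : Finset (Fin n → Stp S)).card :=
    Finset.card_filter_le _ _
  have h2 : (Finset.univ : Finset (Fin n → Stp S)).card = S.card ^ n := by
    rw [Finset.card_univ, Fintype.card_fun]
    congr 1
    · exact Fintype.card_coe S
    · exact Fintype.card_fin n
  have : (walks S n).card ≤ S.card ^ n := h2 ▸ h1
  calc ((walks S n).card : ℝ) ≤ ((S.card ^ n : ℕ) : ℝ) := by exact_mod_cast this
  _ = (S.card : ℝ) ^ n := by push_cast; ring

lemma norm_A_le {x y : ℂ} (hx : ‖x‖ ≤ 1) (hy : ‖y‖ ≤ 1) (n : ℕ) :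
    ‖A S n x y‖ ≤ (S.card : ℝ) ^ n := by
  calc ‖A S n x y‖
      ≤ ∑ s ∈ walks S n, ‖x ^ (ept s).1.toNat * y ^ (ept s).2.toNat‖ := by
        exact norm_sum_le _ _
  _ ≤ ∑ s ∈ walks S n, 1 := by
        refine Finset.sum_le_sum (fun s _ => ?_)
        rw [norm_mul, norm_pow, norm_pow]
        exact mul_le_one₀ (pow_le_one₀ (norm_nonneg x) hx)
          (pow_nonneg (norm_nonneg y) _) (pow_le_one₀ (norm_nonneg y) hy)
  _ = ((walks S n).card : ℝ) := by simp
  _ ≤ (S.card : ℝ) ^ n := card_walks_le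

lemma walkCount_eq (i j : ℤ) (n : ℕ) :
    walkCount S i j n = ((walks S n).filter (fun s => ept s = (i, j))).card := by
  unfold walkCount walks
  rw [Finset.filter_filter]
  congr 1

lemma walkCount_vanish (hS : S ⊆ ({-1, 0, 1} ×ˢ {-1, 0, 1} : Finset (ℤ × ℤ)) \ {((0 : ℤ), (0 : ℤ))})
    {i j : ℤ} {n : ℕ} (h : ¬ (0 ≤ i ∧ i ≤ n ∧ 0 ≤ j ∧ j ≤ n)) :
    walkCount S i j n = 0 := by
  rw [walkCount_eq, Finset.card_eq_zero, Finset.filter_eq_empty_iff]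
  intro s hs heq
  have h1 := ept_nonneg (mem_walks.mp hs)
  have h2 := ept_le hS s
  rw [heq] at h1 h2
  simp only at h1 h2
  exact h ⟨h1.1, h2.1, h1.2, h2.2⟩

lemma sum_box (hS : S ⊆ ({-1, 0, 1} ×ˢ {-1, 0, 1} : Finset (ℤ × ℤ)) \ {((0 : ℤ), (0 : ℤ))})
    (n : ℕ) (x y : ℂ) :
    ∑ p ∈ (Finset.range (n+1)) ×ˢ (Finset.range (n+1)),
      (walkCount S (p.1 : ℤ) (p.2 : ℤ) n : ℂ) * x ^ p.1 * y ^ p.2 = A S n x y := by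
  classical
  set g : (Fin n → Stp S) → ℕ × ℕ := fun s => ((ept s).1.toNat, (ept s).2.toNat) with hg
  have hmaps : ∀ s ∈ walks S n, g s ∈ (Finset.range (n+1)) ×ˢ (Finset.range (n+1)) := by
    intro s hs
    have h1 := ept_nonneg (mem_walks.mp hs)
    have h2 := ept_le hS s
    simp only [hg, Finset.mem_product, Finset.mem_range]
    omega
  rw [A, ← Finset.sum_fiberwise_of_maps_to hmaps
    (fun s => x ^ (ept s).1.toNat * y ^ (ept s).2.toNat)]
  refine Finset.sum_congr rfl (fun p hp => ?_)
  have hfil : (walks S n).filter (fun s => g s = p)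
      = (walks S n).filter (fun s => ept s = ((p.1 : ℤ), (p.2 : ℤ))) := by
    refine Finset.filter_congr (fun s hs => ?_)
    have h1 := ept_nonneg (mem_walks.mp hs)
    simp only [hg, Prod.ext_iff]
    constructor
    · rintro ⟨e1, e2⟩; constructor <;> omega
    · rintro ⟨e1, e2⟩; constructor <;> omega
  have : ∀ s ∈ (walks S n).filter (fun s => g s = p),
      x ^ (ept s).1.toNat * y ^ (ept s).2.toNat = x ^ p.1 * y ^ p.2 := by
    intro s hs
    rw [Finset.mem_filter] at hs
    rw [← hs.2]
  rw [Finset.sum_congr rfl this, Finset.sum_const, hfil, ← walkCount_eq]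
  simp only [nsmul_eq_mul]
  ring


section Analytic

variable (hS : S ⊆ ({-1, 0, 1} ×ˢ {-1, 0, 1} : Finset (ℤ × ℤ)) \ {((0 : ℤ), (0 : ℤ))})
  (hk : 1 ≤ S.card) {z : ℂ} (hz : ‖z‖ < 1 / (S.card : ℝ))

include hk hz in
lemma hr : ‖z‖ * (S.card : ℝ) < 1 := by
  have hk0 : (0 : ℝ) < (S.card : ℝ) := by exact_mod_cast hk
  rwa [lt_div_iff₀ hk0] at hz

include hk hz in
lemma geom_summable : Summable (fun n : ℕ => ((S.card : ℝ) * ‖z‖) ^ n) := by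
  apply summable_geometric_of_lt_one
  · positivity
  · rw [mul_comm]; exact hr hk hz

include hk hz in
lemma summable_Az {x y : ℂ} (hx : ‖x‖ ≤ 1) (hy : ‖y‖ ≤ 1) :
    Summable (fun n : ℕ => A S n x y * z ^ n) := by
  apply Summable.of_norm
  refine Summable.of_nonneg_of_le (fun n => norm_nonneg _) (fun n => ?_) (geom_summable hk hz)
  rw [norm_mul, norm_pow]
  calc ‖A S n x y‖ * ‖z‖ ^ n ≤ (S.card : ℝ) ^ n * ‖z‖ ^ n := by
        apply mul_le_mul_of_nonneg_right (norm_A_le hx hy n) (pow_nonneg (norm_nonneg _) n)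
  _ = ((S.card : ℝ) * ‖z‖) ^ n := by rw [mul_pow]

include hS in
lemma sum_box_wc (n : ℕ) :
    ∑ p ∈ (Finset.range (n+1)) ×ˢ (Finset.range (n+1)),
      walkCount S (p.1 : ℤ) (p.2 : ℤ) n = (walks S n).card := by
  classical
  set g : (Fin n → Stp S) → ℕ × ℕ := fun s => ((ept s).1.toNat, (ept s).2.toNat) with hg
  have hmaps : ∀ s ∈ walks S n, g s ∈ (Finset.range (n+1)) ×ˢ (Finset.range (n+1)) := by
    intro s hs
    have h1 := ept_nonneg (mem_walks.mp hs)
    have h2 := ept_le hS s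
    simp only [hg, Finset.mem_product, Finset.mem_range]
    omega
  rw [Finset.card_eq_sum_card_fiberwise hmaps]
  refine Finset.sum_congr rfl (fun p hp => ?_)
  rw [walkCount_eq]
  congr 1
  refine Finset.filter_congr (fun s hs => ?_)
  have h1 := ept_nonneg (mem_walks.mp hs)
  simp only [hg, Prod.ext_iff]
  constructor
  · rintro ⟨e1, e2⟩; constructor <;> omega
  · rintro ⟨e1, e2⟩; constructor <;> omega

include hS hk hz in
lemma summable_u :
    Summable (fun q : ℕ × (ℕ × ℕ) =>
      (walkCount S (q.2.1 : ℤ) (q.2.2 : ℤ) q.1 : ℝ) * ‖z‖ ^ q.1) := by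
  classical
  rw [summable_prod_of_nonneg (fun q => by positivity)]
  constructor
  · intro n
    apply summable_of_ne_finset_zero (s := (Finset.range (n+1)) ×ˢ (Finset.range (n+1)))
    intro p hp
    have : ¬ (0 ≤ (p.1 : ℤ) ∧ (p.1 : ℤ) ≤ n ∧ 0 ≤ (p.2 : ℤ) ∧ (p.2 : ℤ) ≤ n) := by
      simp only [Finset.mem_product, Finset.mem_range] at hp
      omega
    rw [walkCount_vanish hS this]
    simp
  · apply Summable.of_nonneg_of_le (fun n => tsum_nonneg (fun p => by positivity))
      (fun n => ?_) (geom_summable hk hz)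
    have hts : ∑' p : ℕ × ℕ, (walkCount S (p.1 : ℤ) (p.2 : ℤ) n : ℝ) * ‖z‖ ^ n
        = ∑ p ∈ (Finset.range (n+1)) ×ˢ (Finset.range (n+1)),
            (walkCount S (p.1 : ℤ) (p.2 : ℤ) n : ℝ) * ‖z‖ ^ n := by
      apply tsum_eq_sum
      intro p hp
      have : ¬ (0 ≤ (p.1 : ℤ) ∧ (p.1 : ℤ) ≤ n ∧ 0 ≤ (p.2 : ℤ) ∧ (p.2 : ℤ) ≤ n) := by
        simp only [Finset.mem_product, Finset.mem_range] at hp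
        omega
      rw [walkCount_vanish hS this]
      simp
    rw [hts, ← Finset.sum_mul]
    have : (∑ p ∈ (Finset.range (n+1)) ×ˢ (Finset.range (n+1)),
        (walkCount S (p.1 : ℤ) (p.2 : ℤ) n : ℝ)) = ((walks S n).card : ℝ) := by
      rw [← sum_box_wc hS n]
      push_cast
      rfl
    rw [this, mul_pow]
    exact mul_le_mul_of_nonneg_right card_walks_le (pow_nonneg (norm_nonneg z) n)

def reindex : ℕ × (ℕ × ℕ) ≃ ℕ × ℕ × ℕ where
  toFun q := (q.2.1, q.2.2, q.1)
  invFun p := (p.2.2, p.1, p.2.1)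
  left_inv q := rfl
  right_inv p := rfl

include hS hk hz in
lemma summable_g {x y : ℂ} (hx : ‖x‖ ≤ 1) (hy : ‖y‖ ≤ 1) :
    Summable (fun q : ℕ × (ℕ × ℕ) =>
      (walkCount S (q.2.1 : ℤ) (q.2.2 : ℤ) q.1 : ℂ) * x ^ q.2.1 * y ^ q.2.2 * z ^ q.1) := by
  apply Summable.of_norm
  refine Summable.of_nonneg_of_le (fun q => norm_nonneg _) (fun q => ?_) (summable_u hS hk hz)
  rw [norm_mul, norm_mul, norm_mul, norm_pow, norm_pow, norm_pow]
  have h1 : ‖((walkCount S (q.2.1 : ℤ) (q.2.2 : ℤ) q.1 : ℂ))‖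
      = (walkCount S (q.2.1 : ℤ) (q.2.2 : ℤ) q.1 : ℝ) := by
    rw [Complex.norm_natCast]
  rw [h1]
  calc (walkCount S (q.2.1 : ℤ) (q.2.2 : ℤ) q.1 : ℝ) * ‖x‖ ^ q.2.1 * ‖y‖ ^ q.2.2 * ‖z‖ ^ q.1
      ≤ (walkCount S (q.2.1 : ℤ) (q.2.2 : ℤ) q.1 : ℝ) * 1 * 1 * ‖z‖ ^ q.1 := by
        gcongr
        · exact pow_le_one₀ (norm_nonneg _) hx
        · exact pow_le_one₀ (norm_nonneg _) hy
  _ = (walkCount S (q.2.1 : ℤ) (q.2.2 : ℤ) q.1 : ℝ) * ‖z‖ ^ q.1 := by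
        rw [mul_one, mul_one]

include hS hk hz in
lemma genF_eq {x y : ℂ} (hx : ‖x‖ ≤ 1) (hy : ‖y‖ ≤ 1) :
    genF S x y z = ∑' n : ℕ, A S n x y * z ^ n := by
  classical
  have hsum := summable_g hS hk hz (x := x) (y := y) hx hy
  have h0 : genF S x y z = ∑' q : ℕ × (ℕ × ℕ),
      (walkCount S (q.2.1 : ℤ) (q.2.2 : ℤ) q.1 : ℂ) * x ^ q.2.1 * y ^ q.2.2 * z ^ q.1 := by
    rw [genF]
    exact (Equiv.tsum_eq reindex (fun p : ℕ × ℕ × ℕ =>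
      (walkCount S (p.1 : ℤ) (p.2.1 : ℤ) p.2.2 : ℂ) * x ^ p.1 * y ^ p.2.1 * z ^ p.2.2)).symm
  rw [h0, Summable.tsum_prod hsum]
  refine tsum_congr (fun n => ?_)
  have hts : ∑' p : ℕ × ℕ, (walkCount S (p.1 : ℤ) (p.2 : ℤ) n : ℂ) * x ^ p.1 * y ^ p.2 * z ^ n
      = ∑ p ∈ (Finset.range (n+1)) ×ˢ (Finset.range (n+1)),
          (walkCount S (p.1 : ℤ) (p.2 : ℤ) n : ℂ) * x ^ p.1 * y ^ p.2 * z ^ n := by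
    apply tsum_eq_sum
    intro p hp
    have : ¬ (0 ≤ (p.1 : ℤ) ∧ (p.1 : ℤ) ≤ n ∧ 0 ≤ (p.2 : ℤ) ∧ (p.2 : ℤ) ≤ n) := by
      simp only [Finset.mem_product, Finset.mem_range] at hp
      omega
    rw [walkCount_vanish hS this]
    simp
  have h1 : (∑' c : ℕ × ℕ, (walkCount S (c.1 : ℤ) (c.2 : ℤ) n : ℂ) * x ^ c.1 * y ^ c.2 * z ^ n)
      = A S n x y * z ^ n := by
    rw [hts, ← Finset.sum_mul, sum_box hS n x y]
  exact h1

end Analytic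

end QWaux

/-- The kernel `K(x,y;z) = z·Σ_{(i,j)∈S} x^{i+1} y^{j+1} − x y`. -/
noncomputable def kernel (S : Finset (ℤ × ℤ)) (x y z : ℂ) : ℂ :=
  z * ∑ p ∈ S, x ^ (p.1 + 1) * y ^ (p.2 + 1) - x * y

/-- `c̃(y;z) = z·Σ_{(−1,j)∈S} y^{j+1}`. -/
noncomputable def ctpoly (S : Finset (ℤ × ℤ)) (y z : ℂ) : ℂ :=
  z * ∑ p ∈ S.filter (fun p => p.1 = -1), y ^ (p.2 + 1)

/-- `δ = 1` if `(−1,−1) ∈ S`, `0` otherwise. -/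
def delta (S : Finset (ℤ × ℤ)) : ℂ :=
  if ((-1, -1) : ℤ × ℤ) ∈ S then 1 else 0

open QWaux

/-- Evaluating the functional equation on the zero set of the kernel. -/
theorem functional_equation_on_kernel_zero (S : Finset (ℤ × ℤ))
    (hS : S ⊆ ({-1, 0, 1} ×ˢ {-1, 0, 1} : Finset (ℤ × ℤ)) \ {((0 : ℤ), (0 : ℤ))})
    (hk : 1 ≤ S.card)
    (x y z : ℂ) (hx : ‖x‖ ≤ 1) (hy : ‖y‖ ≤ 1)
    (hz : ‖z‖ < 1 / (S.card : ℝ))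
    (hker : kernel S x y z = 0) :
    cpoly S x z * genF S x 0 z + ctpoly S y z * genF S 0 y z
      - z * delta S * genF S 0 0 z = x * y := by
  classical
  have h0 : ‖(0 : ℂ)‖ ≤ 1 := by simp
  -- the four power series
  have hfxy : Summable (fun n : ℕ => A S n x y * z ^ n) := summable_Az hk hz hx hy
  have hf0y : Summable (fun n : ℕ => A S n 0 y * z ^ n) := summable_Az hk hz h0 hy
  have hfx0 : Summable (fun n : ℕ => A S n x 0 * z ^ n) := summable_Az hk hz hx h0
  have hf00 : Summable (fun n : ℕ => A S n 0 0 * z ^ n) := summable_Az hk hz h0 h0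
  set T : ℂ := ∑ p ∈ S, x ^ (p.1 + 1).toNat * y ^ (p.2 + 1).toNat with hTdef
  set C : ℂ := ∑ p ∈ S.filter (fun p => p.2 = -1), x ^ (p.1 + 1).toNat with hCdef
  set Ct : ℂ := ∑ p ∈ S.filter (fun p => p.1 = -1), y ^ (p.2 + 1).toNat with hCtdef
  set D : ℂ := if ((-1, -1) : ℤ × ℤ) ∈ S then (1 : ℂ) else 0 with hDdef
  -- kernel gives z * T = x * y
  have hzp : ∀ p ∈ S, x ^ (p.1 + 1) * y ^ (p.2 + 1)
      = x ^ (p.1 + 1).toNat * y ^ (p.2 + 1).toNat := by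
    intro p hp
    obtain ⟨⟨b1, b2⟩, b3, b4⟩ := step_bd hS hp
    rw [zpow_toNat x (by omega : (0:ℤ) ≤ p.1 + 1), zpow_toNat y (by omega : (0:ℤ) ≤ p.2 + 1)]
  have hTk : z * T = x * y := by
    rw [kernel] at hker
    rw [Finset.sum_congr rfl hzp] at hker
    rw [← hTdef] at hker
    exact sub_eq_zero.mp hker
  have hcC : cpoly S x z = z * C := by
    rw [cpoly, hCdef]
    congr 1
    refine Finset.sum_congr rfl (fun p hp => ?_)
    obtain ⟨⟨b1, b2⟩, b3, b4⟩ := step_bd hS (Finset.mem_filter.mp hp).1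
    rw [zpow_toNat x (by omega : (0:ℤ) ≤ p.1 + 1)]
  have hcCt : ctpoly S y z = z * Ct := by
    rw [ctpoly, hCtdef]
    congr 1
    refine Finset.sum_congr rfl (fun p hp => ?_)
    obtain ⟨⟨b1, b2⟩, b3, b4⟩ := step_bd hS (Finset.mem_filter.mp hp).1
    rw [zpow_toNat y (by omega : (0:ℤ) ≤ p.2 + 1)]
  have hdel : delta S = D := rfl
  -- the recursion, multiplied by z^(n+1)
  have key : ∀ n : ℕ, x * y * (A S (n+1) x y * z ^ (n+1))
      = z * (T * (A S n x y * z ^ n) - Ct * (A S n 0 y * z ^ n)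
          - C * (A S n x 0 * z ^ n) + D * (A S n 0 0 * z ^ n)) := by
    intro n
    have h := A_rec hS n x y
    rw [hTdef, hCdef, hCtdef, hDdef]
    calc x * y * (A S (n+1) x y * z ^ (n+1))
        = (x * y * A S (n+1) x y) * z ^ (n+1) := by ring
    _ = ((∑ p ∈ S, x ^ (p.1 + 1).toNat * y ^ (p.2 + 1).toNat) * A S n x y
          - (∑ p ∈ S.filter (fun p => p.1 = -1), y ^ (p.2 + 1).toNat) * A S n 0 y
          - (∑ p ∈ S.filter (fun p => p.2 = -1), x ^ (p.1 + 1).toNat) * A S n x 0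
          + (if ((-1, -1) : ℤ × ℤ) ∈ S then (1:ℂ) else 0) * A S n 0 0) * z ^ (n+1) := by
        rw [h]
    _ = _ := by rw [pow_succ]; ring
  -- sum the recursion over n
  have hsum_eq : ∑' n : ℕ, x * y * (A S (n+1) x y * z ^ (n+1))
      = ∑' n : ℕ, z * (T * (A S n x y * z ^ n) - Ct * (A S n 0 y * z ^ n)
          - C * (A S n x 0 * z ^ n) + D * (A S n 0 0 * z ^ n)) := tsum_congr key
  rw [tsum_mul_left, tsum_mul_left] at hsum_eq
  have hshift : ∑' n : ℕ, A S (n+1) x y * z ^ (n+1)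
      = (∑' n : ℕ, A S n x y * z ^ n) - 1 := by
    have h1 := Summable.tsum_eq_zero_add hfxy
    have h2 : A S 0 x y * z ^ 0 = 1 := by rw [A_zero]; simp
    rw [h2] at h1
    linear_combination -h1
  rw [hshift] at hsum_eq
  have hG : ∑' n : ℕ, (T * (A S n x y * z ^ n) - Ct * (A S n 0 y * z ^ n)
      - C * (A S n x 0 * z ^ n) + D * (A S n 0 0 * z ^ n))
      = T * (∑' n : ℕ, A S n x y * z ^ n) - Ct * (∑' n : ℕ, A S n 0 y * z ^ n)
        - C * (∑' n : ℕ, A S n x 0 * z ^ n) + D * (∑' n : ℕ, A S n 0 0 * z ^ n) := by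
    rw [Summable.tsum_add (((hfxy.mul_left T).sub (hf0y.mul_left Ct)).sub (hfx0.mul_left C))
        (hf00.mul_left D),
      Summable.tsum_sub ((hfxy.mul_left T).sub (hf0y.mul_left Ct)) (hfx0.mul_left C),
      Summable.tsum_sub (hfxy.mul_left T) (hf0y.mul_left Ct),
      tsum_mul_left, tsum_mul_left, tsum_mul_left, tsum_mul_left]
  rw [hG] at hsum_eq
  -- substitute the generating functions
  rw [hcC, hcCt, hdel,
    genF_eq hS hk hz hx h0, genF_eq hS hk hz h0 hy, genF_eq hS hk hz h0 h0]
  linear_combination hsum_eq + (∑' n : ℕ, A S n x y * z ^ n) * hTk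
end

section
/- For every complex x, x′, y, z with |x| ≤ 1, |x′| ≤ 1, |y| ≤ 1, |z| < 1/k, K(x,y;z) = 0 and K(x′,y;z) = 0, one has c(x′;z)·Q(x′,0;z) − c(x;z)·Q(x,0;z) = (x′ − x)·y. -/
lemma walkCount_zero (S : Finset (ℤ × ℤ)) (i j : ℤ) :
    walkCount S i j 0 = if i = 0 ∧ j = 0 then 1 else 0 := by
  unfold walkCount
  split_ifs with h
  · obtain ⟨rfl, rfl⟩ := h
    rw [Finset.filter_true_of_mem, Finset.card_univ]
    · simp [Fintype.card_fun]
    · intro s _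
      refine ⟨fun l => l.elim0, by simp; rfl⟩
  · rw [Finset.filter_false_of_mem, Finset.card_empty]
    intro s _
    simp only [not_and]
    intro _
    simp only [Finset.univ_eq_empty, Finset.sum_empty]
    intro hh
    exact h ⟨(congrArg Prod.fst hh).symm, (congrArg Prod.snd hh).symm⟩

lemma walkCount_le (S : Finset (ℤ × ℤ)) (i j : ℤ) (n : ℕ) :
    walkCount S i j n ≤ S.card ^ n := by
  calc walkCount S i j n ≤ (Finset.univ : Finset (Fin n → {p : ℤ × ℤ // p ∈ S})).card :=
        Finset.card_filter_le _ _
    _ = S.card ^ n := by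
        rw [Finset.card_univ, Fintype.card_fun]
        simp

lemma walkCount_eq_zero (S : Finset (ℤ × ℤ)) (hb : ∀ p ∈ S, p.1 ≤ 1 ∧ p.2 ≤ 1)
    (i j : ℤ) (n : ℕ) (h : i < 0 ∨ j < 0 ∨ (n : ℤ) < i ∨ (n : ℤ) < j) :
    walkCount S i j n = 0 := by
  cases n with
  | zero =>
      rw [walkCount_zero, if_neg]
      rintro ⟨rfl, rfl⟩
      simp at h
  | succ n' =>
      unfold walkCount
      rw [Finset.card_eq_zero, Finset.filter_eq_empty_iff]
      rintro s - ⟨hpos, hsum⟩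
      have hfi : i = ∑ m : Fin (n' + 1), ((s m : ℤ × ℤ)).1 := by
        rw [← Prod.fst_sum, hsum]
      have hfj : j = ∑ m : Fin (n' + 1), ((s m : ℤ × ℤ)).2 := by
        rw [← Prod.snd_sum, hsum]
      have hflt : (Finset.univ.filter (fun m : Fin (n' + 1) => m ≤ Fin.last n')) =
          Finset.univ := Finset.filter_true_of_mem (fun m _ => Fin.le_last m)
      have h1 := hpos (Fin.last n')
      rw [hflt] at h1
      have hui : ∑ m : Fin (n' + 1), ((s m : ℤ × ℤ)).1 ≤ (n' + 1 : ℤ) := by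
        calc ∑ m : Fin (n' + 1), ((s m : ℤ × ℤ)).1 ≤ ∑ _m : Fin (n' + 1), (1 : ℤ) :=
              Finset.sum_le_sum (fun m _ => (hb _ (s m).2).1)
          _ = (n' + 1 : ℤ) := by simp
      have huj : ∑ m : Fin (n' + 1), ((s m : ℤ × ℤ)).2 ≤ (n' + 1 : ℤ) := by
        calc ∑ m : Fin (n' + 1), ((s m : ℤ × ℤ)).2 ≤ ∑ _m : Fin (n' + 1), (1 : ℤ) :=
              Finset.sum_le_sum (fun m _ => (hb _ (s m).2).2)
          _ = (n' + 1 : ℤ) := by simp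
      push_cast at h
      omega

lemma partial_castSucc {n : ℕ} (f : Fin (n + 1) → ℤ) (l : Fin n) :
    ∑ m ∈ Finset.univ.filter (fun m => m ≤ l.castSucc), f m =
      ∑ m ∈ Finset.univ.filter (fun m => m ≤ l), f m.castSucc := by
  rw [Finset.sum_filter, Finset.sum_filter, Fin.sum_univ_castSucc]
  rw [if_neg (not_le.mpr (Fin.castSucc_lt_last l)), add_zero]
  exact Finset.sum_congr rfl fun m _ => by simp only [Fin.castSucc_le_castSucc_iff]

lemma filter_le_last {n : ℕ} :
    (Finset.univ.filter (fun m : Fin (n + 1) => m ≤ Fin.last n)) = Finset.univ :=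
  Finset.filter_true_of_mem (fun m _ => Fin.le_last m)

lemma walkCount_succ (S : Finset (ℤ × ℤ)) (i j : ℤ) (hi : 0 ≤ i) (hj : 0 ≤ j) (n : ℕ) :
    walkCount S i j (n + 1) = ∑ p ∈ S, walkCount S (i - p.1) (j - p.2) n := by
  rw [← Finset.sum_attach S (fun p => walkCount S (i - p.1) (j - p.2) n)]
  unfold walkCount
  rw [Finset.card_eq_sum_card_fiberwise
    (f := fun t : Fin (n + 1) → {p : ℤ × ℤ // p ∈ S} => t (Fin.last n))
    (t := Finset.univ) (fun _ _ => Finset.mem_univ _), Finset.univ_eq_attach]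
  refine Finset.sum_congr rfl fun p _ => ?_
  refine Finset.card_bij (fun t _ => Fin.init t) ?_ ?_ ?_
  · rintro t ht
    simp only [Finset.mem_filter, Finset.mem_univ, true_and] at ht ⊢
    obtain ⟨⟨hpos, hsum⟩, hlast⟩ := ht
    have hinit : ∀ m : Fin n, ((Fin.init t m : ℤ × ℤ)) = ((t m.castSucc : ℤ × ℤ)) := fun m => rfl
    have hsum' : (∑ m : Fin n, ((Fin.init t m : ℤ × ℤ))) = (i - (p : ℤ × ℤ).1, j - (p : ℤ × ℤ).2) := by
      have := Fin.sum_univ_castSucc (fun m => ((t m : ℤ × ℤ)))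
      rw [hsum, hlast] at this
      have h2 : (∑ m : Fin n, ((t m.castSucc : ℤ × ℤ))) = (i, j) - (p : ℤ × ℤ) := by
        rw [eq_sub_iff_add_eq, ← this]
      rw [Finset.sum_congr rfl fun m _ => hinit m, h2, Prod.sub_def]
    refine ⟨fun l => ?_, hsum'⟩
    have h1 := hpos l.castSucc
    rwa [partial_castSucc (fun m => ((t m : ℤ × ℤ)).1) l,
      partial_castSucc (fun m => ((t m : ℤ × ℤ)).2) l] at h1
  · intro t1 h1 t2 h2 heq
    simp only [Finset.mem_filter] at h1 h2
    have heq' : Fin.init t1 = Fin.init t2 := heq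
    rw [← Fin.snoc_init_self t1, ← Fin.snoc_init_self t2, heq', h1.2, h2.2]
  · intro s hs
    simp only [Finset.mem_filter, Finset.mem_univ, true_and] at hs
    obtain ⟨hpos, hsum⟩ := hs
    set t : Fin (n + 1) → {q : ℤ × ℤ // q ∈ S} := Fin.snoc s p with htdef
    have hlast : t (Fin.last n) = p := by rw [htdef]; simp
    have hcast : ∀ m : Fin n, t m.castSucc = s m := fun m => by rw [htdef]; simp
    have hcast1 : ∀ m : Fin n, ((t m.castSucc : ℤ × ℤ)) = ((s m : ℤ × ℤ)) := fun m => by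
      rw [hcast]
    have htot : (∑ m : Fin (n + 1), ((t m : ℤ × ℤ))) = (i, j) := by
      have hcs : ∑ m : Fin n, ((t m.castSucc : ℤ × ℤ)) = ∑ m : Fin n, ((s m : ℤ × ℤ)) :=
        Finset.sum_congr rfl fun m _ => hcast1 m
      rw [Fin.sum_univ_castSucc (fun m => ((t m : ℤ × ℤ))), hcs, hlast, hsum]
      ext <;> simp
    have hmem : t ∈ Finset.filter (fun a => a (Fin.last n) = p)
        (Finset.filter
          (fun u : Fin (n + 1) → {q : ℤ × ℤ // q ∈ S} =>
            (∀ l : Fin (n + 1),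
                0 ≤ (∑ m ∈ Finset.univ.filter (fun m => m ≤ l), ((u m : ℤ × ℤ)).1) ∧
                0 ≤ (∑ m ∈ Finset.univ.filter (fun m => m ≤ l), ((u m : ℤ × ℤ)).2)) ∧
            (∑ m : Fin (n + 1), (u m : ℤ × ℤ)) = (i, j))
          Finset.univ) := by
      simp only [Finset.mem_filter, Finset.mem_univ, true_and]
      refine ⟨⟨fun l => ?_, htot⟩, hlast⟩
      induction l using Fin.lastCases with
      | last =>
          rw [filter_le_last]
          refine ⟨?_, ?_⟩
          · have h' : (∑ m : Fin (n + 1), ((t m : ℤ × ℤ)).1) = i := by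
              rw [← Prod.fst_sum, htot]
            omega
          · have h' : (∑ m : Fin (n + 1), ((t m : ℤ × ℤ)).2) = j := by
              rw [← Prod.snd_sum, htot]
            omega
      | cast l =>
          rw [partial_castSucc (fun m => ((t m : ℤ × ℤ)).1) l,
            partial_castSucc (fun m => ((t m : ℤ × ℤ)).2) l]
          have e1 : ∀ m ∈ Finset.univ.filter (fun m => m ≤ l),
              ((t m.castSucc : ℤ × ℤ)).1 = ((s m : ℤ × ℤ)).1 := fun m _ => by rw [hcast]
          have e2 : ∀ m ∈ Finset.univ.filter (fun m => m ≤ l),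
              ((t m.castSucc : ℤ × ℤ)).2 = ((s m : ℤ × ℤ)).2 := fun m _ => by rw [hcast]
          rw [Finset.sum_congr rfl e1, Finset.sum_congr rfl e2]
          exact hpos l
    exact ⟨t, hmem, by show Fin.init t = s; rw [htdef]; simp⟩

open Finset in
noncomputable def Pn (S : Finset (ℤ × ℤ)) (x y : ℂ) (n : ℕ) : ℂ :=
  ∑ i ∈ range (n + 1), ∑ j ∈ range (n + 1), (walkCount S i j n : ℂ) * x ^ i * y ^ j

open Finset in
noncomputable def rowP (S : Finset (ℤ × ℤ)) (y : ℂ) (n : ℕ) (m : ℤ) : ℂ :=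
  ∑ j ∈ range (n + 1), (walkCount S m j n : ℂ) * y ^ j

noncomputable def colQ (S : Finset (ℤ × ℤ)) (n : ℕ) (m : ℤ) : ℂ :=
  (walkCount S m 0 n : ℂ)

section helpers
open Finset
variable {S : Finset (ℤ × ℤ)}

lemma rowP_vanish (hbS : ∀ p ∈ S, p.1 ≤ 1 ∧ p.2 ≤ 1) (y : ℂ) (n : ℕ) (m : ℤ) (h : m < 0 ∨ (n : ℤ) < m) :
    rowP S y n m = 0 := by
  unfold rowP
  refine Finset.sum_eq_zero fun j _ => ?_
  rw [walkCount_eq_zero S hbS _ _ _ (by tauto)]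
  simp

lemma colQ_vanish (hbS : ∀ p ∈ S, p.1 ≤ 1 ∧ p.2 ≤ 1) (n : ℕ) (m : ℤ) (h : m < 0 ∨ (n : ℤ) < m) : colQ S n m = 0 := by
  unfold colQ
  rw [walkCount_eq_zero S hbS _ _ _ (by tauto)]
  simp

lemma Pn_eq_row (x y : ℂ) (n : ℕ) :
    Pn S x y n = ∑ i ∈ range (n + 1), rowP S y n i * x ^ i := by
  unfold Pn rowP
  refine Finset.sum_congr rfl fun i _ => ?_
  rw [Finset.sum_mul]
  exact Finset.sum_congr rfl fun j _ => by ring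

lemma rowP_zero (y : ℂ) (n : ℕ) : rowP S y n 0 = Pn S 0 y n := by
  rw [Pn_eq_row, Finset.sum_eq_single 0]
  · simp
  · intro i hi hne
    rw [zero_pow (by exact_mod_cast hne), mul_zero]
  · simp

lemma colQ_sum (x : ℂ) (n : ℕ) : ∑ i ∈ range (n + 1), colQ S n i * x ^ i = Pn S x 0 n := by
  unfold Pn colQ
  refine Finset.sum_congr rfl fun i _ => ?_
  rw [Finset.sum_eq_single 0]
  · simp
  · intro j hj hne
    rw [zero_pow (by exact_mod_cast hne), mul_zero]
  · simp

lemma colQ_zero (n : ℕ) : colQ S n 0 = Pn S 0 0 n := by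
  rw [← colQ_sum 0 n, Finset.sum_eq_single 0]
  · simp
  · intro i hi hne
    rw [zero_pow (by exact_mod_cast hne), mul_zero]
  · simp

lemma shift_pos (f : ℤ → ℂ) (n : ℕ) (hf : ∀ m : ℤ, m < 0 ∨ (n : ℤ) < m → f m = 0) (x : ℂ) :
    ∑ i ∈ range (n + 2), f ((i : ℤ) - 1) * x ^ (i + 1) =
      (∑ i ∈ range (n + 1), f (i : ℤ) * x ^ i) * x ^ 2 := by
  rw [Finset.sum_range_succ' (fun i => f ((i : ℤ) - 1) * x ^ (i + 1)) (n + 1)]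
  have h0 : f ((0 : ℕ) - 1 : ℤ) * x ^ (0 + 1) = 0 := by
    rw [hf _ (by left; simp)]; ring
  rw [h0, add_zero, Finset.sum_mul]
  refine Finset.sum_congr rfl fun i _ => ?_
  have : ((i + 1 : ℕ) : ℤ) - 1 = (i : ℤ) := by push_cast; ring
  rw [this]; ring

lemma shift_zero' (f : ℤ → ℂ) (n : ℕ) (hf : ∀ m : ℤ, m < 0 ∨ (n : ℤ) < m → f m = 0) (x : ℂ) :
    ∑ i ∈ range (n + 2), f (i : ℤ) * x ^ (i + 1) =
      (∑ i ∈ range (n + 1), f (i : ℤ) * x ^ i) * x := by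
  rw [Finset.sum_range_succ (fun i => f (i : ℤ) * x ^ (i + 1)) (n + 1)]
  rw [hf ((n + 1 : ℕ) : ℤ) (by right; push_cast; omega), zero_mul, add_zero, Finset.sum_mul]
  exact Finset.sum_congr rfl fun i _ => by ring

lemma shift_neg (f : ℤ → ℂ) (n : ℕ) (hf : ∀ m : ℤ, m < 0 ∨ (n : ℤ) < m → f m = 0) (x : ℂ) :
    ∑ i ∈ range (n + 2), f ((i : ℤ) + 1) * x ^ (i + 1) =
      (∑ i ∈ range (n + 1), f (i : ℤ) * x ^ i) - f 0 := by
  have key : ∑ i ∈ range (n + 3), f (i : ℤ) * x ^ i =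
      (∑ i ∈ range (n + 2), f ((i : ℤ) + 1) * x ^ (i + 1)) + f 0 := by
    rw [Finset.sum_range_succ' (fun i => f (i : ℤ) * x ^ i) (n + 2)]
    simp only [Nat.cast_zero, pow_zero, mul_one]
    congr 1
  have h1 : ∑ i ∈ range (n + 3), f (i : ℤ) * x ^ i =
      ∑ i ∈ range (n + 1), f (i : ℤ) * x ^ i := by
    rw [Finset.sum_range_succ, Finset.sum_range_succ,
      hf ((n + 1 : ℕ) : ℤ) (by right; push_cast; omega),
      hf ((n + 2 : ℕ) : ℤ) (by right; push_cast; omega)]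
    simp
  rw [← h1, key]
  ring

end helpers

open Finset in
lemma double_shift {S : Finset (ℤ × ℤ)} (hbS : ∀ p ∈ S, p.1 ≤ 1 ∧ p.2 ≤ 1)
    (x y : ℂ) (n : ℕ) (a b : ℤ) (ha : a = -1 ∨ a = 0 ∨ a = 1) (hb : b = -1 ∨ b = 0 ∨ b = 1) :
    ∑ i ∈ range (n + 2), ∑ j ∈ range (n + 2),
        (walkCount S ((i : ℤ) - a) ((j : ℤ) - b) n : ℂ) * x ^ (i + 1) * y ^ (j + 1)
    = x ^ (a + 1) * y ^ (b + 1) * Pn S x y n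
      - (if a = -1 then y ^ (b + 1) * Pn S 0 y n else 0)
      - (if b = -1 then x ^ (a + 1) * Pn S x 0 n else 0)
      + (if a = -1 ∧ b = -1 then Pn S 0 0 n else 0) := by
  have hrv : ∀ m : ℤ, m < 0 ∨ (n : ℤ) < m → rowP S y n m = 0 :=
    fun m hm => rowP_vanish hbS y n m hm
  have hcv : ∀ m : ℤ, m < 0 ∨ (n : ℤ) < m → colQ S n m = 0 :=
    fun m hm => colQ_vanish hbS n m hm
  have hqv : ∀ c m : ℤ, m < 0 ∨ (n : ℤ) < m → (walkCount S c m n : ℂ) = 0 := fun c m hm => by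
    rw [walkCount_eq_zero S hbS _ _ _ (by tauto)]; simp
  have step1 : ∑ i ∈ range (n + 2), ∑ j ∈ range (n + 2),
        (walkCount S ((i : ℤ) - a) ((j : ℤ) - b) n : ℂ) * x ^ (i + 1) * y ^ (j + 1)
      = ∑ i ∈ range (n + 2),
          (∑ j ∈ range (n + 2), (walkCount S ((i : ℤ) - a) ((j : ℤ) - b) n : ℂ) * y ^ (j + 1))
            * x ^ (i + 1) := by
    refine Finset.sum_congr rfl fun i _ => ?_
    rw [Finset.sum_mul]
    exact Finset.sum_congr rfl fun j _ => by ring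
  rw [step1]
  rcases hb with rfl | rfl | rfl
  · -- b = -1
    have hin : ∀ c : ℤ, ∑ j ∈ range (n + 2),
        (walkCount S c ((j : ℤ) - (-1)) n : ℂ) * y ^ (j + 1) = rowP S y n c - colQ S n c := by
      intro c
      have := shift_neg (fun m => (walkCount S c m n : ℂ)) n (fun m hm => hqv c m hm) y
      simpa [rowP, colQ, sub_neg_eq_add] using this
    have step2 : ∑ i ∈ range (n + 2),
          (∑ j ∈ range (n + 2), (walkCount S ((i : ℤ) - a) ((j : ℤ) - (-1)) n : ℂ) * y ^ (j + 1))
            * x ^ (i + 1)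
        = (∑ i ∈ range (n + 2), rowP S y n ((i : ℤ) - a) * x ^ (i + 1))
          - ∑ i ∈ range (n + 2), colQ S n ((i : ℤ) - a) * x ^ (i + 1) := by
      rw [← Finset.sum_sub_distrib]
      exact Finset.sum_congr rfl fun i _ => by rw [hin]; ring
    rw [step2]
    rcases ha with rfl | rfl | rfl
    · simp only [sub_neg_eq_add]
      rw [shift_neg (rowP S y n) n hrv x, shift_neg (colQ S n) n hcv x,
        ← Pn_eq_row, colQ_sum, rowP_zero, colQ_zero]
      norm_num
      ring
    · simp only [sub_zero]
      rw [shift_zero' (rowP S y n) n hrv x, shift_zero' (colQ S n) n hcv x,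
        ← Pn_eq_row, colQ_sum]
      norm_num [zpow_one]
      ring
    · rw [shift_pos (rowP S y n) n hrv x, shift_pos (colQ S n) n hcv x,
        ← Pn_eq_row, colQ_sum]
      norm_num [zpow_two]
      ring
  · -- b = 0
    have hin : ∀ c : ℤ, ∑ j ∈ range (n + 2),
        (walkCount S c ((j : ℤ) - 0) n : ℂ) * y ^ (j + 1) = rowP S y n c * y := by
      intro c
      have := shift_zero' (fun m => (walkCount S c m n : ℂ)) n (fun m hm => hqv c m hm) y
      simpa [rowP, sub_zero] using this
    have step2 : ∑ i ∈ range (n + 2),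
          (∑ j ∈ range (n + 2), (walkCount S ((i : ℤ) - a) ((j : ℤ) - 0) n : ℂ) * y ^ (j + 1))
            * x ^ (i + 1)
        = (∑ i ∈ range (n + 2), rowP S y n ((i : ℤ) - a) * x ^ (i + 1)) * y := by
      rw [Finset.sum_mul]
      exact Finset.sum_congr rfl fun i _ => by rw [hin]; ring
    rw [step2]
    rcases ha with rfl | rfl | rfl
    · simp only [sub_neg_eq_add]
      rw [shift_neg (rowP S y n) n hrv x, ← Pn_eq_row, rowP_zero]
      norm_num [zpow_one]
      ring
    · simp only [sub_zero]
      rw [shift_zero' (rowP S y n) n hrv x, ← Pn_eq_row]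
      norm_num [zpow_one]
      ring
    · rw [shift_pos (rowP S y n) n hrv x, ← Pn_eq_row]
      norm_num [zpow_two, zpow_one]
      ring
  · -- b = 1
    have hin : ∀ c : ℤ, ∑ j ∈ range (n + 2),
        (walkCount S c ((j : ℤ) - 1) n : ℂ) * y ^ (j + 1) = rowP S y n c * y ^ 2 := by
      intro c
      have := shift_pos (fun m => (walkCount S c m n : ℂ)) n (fun m hm => hqv c m hm) y
      simpa [rowP] using this
    have step2 : ∑ i ∈ range (n + 2),
          (∑ j ∈ range (n + 2), (walkCount S ((i : ℤ) - a) ((j : ℤ) - 1) n : ℂ) * y ^ (j + 1))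
            * x ^ (i + 1)
        = (∑ i ∈ range (n + 2), rowP S y n ((i : ℤ) - a) * x ^ (i + 1)) * y ^ 2 := by
      rw [Finset.sum_mul]
      exact Finset.sum_congr rfl fun i _ => by rw [hin]; ring
    rw [step2]
    rcases ha with rfl | rfl | rfl
    · simp only [sub_neg_eq_add]
      rw [shift_neg (rowP S y n) n hrv x, ← Pn_eq_row, rowP_zero]
      norm_num [zpow_two]
      ring
    · simp only [sub_zero]
      rw [shift_zero' (rowP S y n) n hrv x, ← Pn_eq_row]
      norm_num [zpow_one, zpow_two]
      ring
    · rw [shift_pos (rowP S y n) n hrv x, ← Pn_eq_row]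
      norm_num [zpow_two]
      ring

open Finset in
lemma Pn_succ {S : Finset (ℤ × ℤ)} (hbS : ∀ p ∈ S, p.1 ≤ 1 ∧ p.2 ≤ 1)
    (hco : ∀ p ∈ S, (p.1 = -1 ∨ p.1 = 0 ∨ p.1 = 1) ∧ (p.2 = -1 ∨ p.2 = 0 ∨ p.2 = 1))
    (x y : ℂ) (n : ℕ) :
    x * y * Pn S x y (n + 1) =
      (∑ p ∈ S, x ^ (p.1 + 1) * y ^ (p.2 + 1)) * Pn S x y n
      - (∑ p ∈ S.filter (fun p => p.1 = -1), y ^ (p.2 + 1)) * Pn S 0 y n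
      - (∑ p ∈ S.filter (fun p => p.2 = -1), x ^ (p.1 + 1)) * Pn S x 0 n
      + delta S * Pn S 0 0 n := by
  have step1 : x * y * Pn S x y (n + 1) =
      ∑ i ∈ range (n + 2), ∑ j ∈ range (n + 2),
        (walkCount S i j (n + 1) : ℂ) * x ^ (i + 1) * y ^ (j + 1) := by
    unfold Pn
    rw [Finset.mul_sum]
    refine Finset.sum_congr rfl fun i _ => ?_
    rw [Finset.mul_sum]
    exact Finset.sum_congr rfl fun j _ => by ring
  have step2 : ∀ i ∈ range (n + 2), ∀ j ∈ range (n + 2),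
      (walkCount S i j (n + 1) : ℂ) =
        ∑ p ∈ S, (walkCount S ((i : ℤ) - p.1) ((j : ℤ) - p.2) n : ℂ) := by
    intro i _ j _
    rw [walkCount_succ S i j (by positivity) (by positivity) n]
    push_cast
    rfl
  rw [step1]
  have step3 : ∑ i ∈ range (n + 2), ∑ j ∈ range (n + 2),
        (walkCount S i j (n + 1) : ℂ) * x ^ (i + 1) * y ^ (j + 1)
      = ∑ p ∈ S, ∑ i ∈ range (n + 2), ∑ j ∈ range (n + 2),
          (walkCount S ((i : ℤ) - p.1) ((j : ℤ) - p.2) n : ℂ) * x ^ (i + 1) * y ^ (j + 1) := by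
    symm
    rw [Finset.sum_comm]
    refine Finset.sum_congr rfl fun i hi => ?_
    rw [Finset.sum_comm]
    refine Finset.sum_congr rfl fun j hj => ?_
    rw [step2 i hi j hj, Finset.sum_mul, Finset.sum_mul]
  rw [step3]
  have step4 : ∀ p ∈ S, ∑ i ∈ range (n + 2), ∑ j ∈ range (n + 2),
        (walkCount S ((i : ℤ) - p.1) ((j : ℤ) - p.2) n : ℂ) * x ^ (i + 1) * y ^ (j + 1)
      = x ^ (p.1 + 1) * y ^ (p.2 + 1) * Pn S x y n
        - (if p.1 = -1 then y ^ (p.2 + 1) * Pn S 0 y n else 0)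
        - (if p.2 = -1 then x ^ (p.1 + 1) * Pn S x 0 n else 0)
        + (if p.1 = -1 ∧ p.2 = -1 then Pn S 0 0 n else 0) := fun p hp =>
    double_shift hbS x y n p.1 p.2 (hco p hp).1 (hco p hp).2
  rw [Finset.sum_congr rfl step4]
  rw [Finset.sum_add_distrib, Finset.sum_sub_distrib, Finset.sum_sub_distrib]
  have hd : ∑ p ∈ S, (if p.1 = -1 ∧ p.2 = -1 then Pn S 0 0 n else 0)
      = delta S * Pn S 0 0 n := by
    have hiff : ∀ p : ℤ × ℤ, (p.1 = -1 ∧ p.2 = -1) ↔ p = ((-1 : ℤ), (-1 : ℤ)) := fun p => by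
      rw [Prod.ext_iff]
    rw [Finset.sum_congr rfl fun p _ => if_congr (hiff p) rfl rfl,
      Finset.sum_ite_eq' S ((-1 : ℤ), (-1 : ℤ)) fun _ => Pn S 0 0 n]
    unfold delta
    split_ifs <;> simp
  rw [hd, Finset.sum_mul, Finset.sum_mul, Finset.sum_mul, Finset.sum_filter, Finset.sum_filter]

lemma summable_geom_sq {r : ℝ} (h0 : 0 ≤ r) (h1 : r < 1) :
    Summable (fun n : ℕ => ((n : ℝ) + 1) ^ 2 * r ^ n) := by
  have hnorm : ‖r‖ < 1 := by rwa [Real.norm_eq_abs, abs_of_nonneg h0]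
  have h2 := summable_pow_mul_geometric_of_norm_lt_one 2 hnorm
  have h1' := summable_pow_mul_geometric_of_norm_lt_one 1 hnorm
  have h0' := summable_pow_mul_geometric_of_norm_lt_one 0 hnorm
  exact ((h2.add (h1'.mul_left 2)).add h0').congr fun n => by push_cast; ring

open Finset in
lemma Pn_norm_le {S : Finset (ℤ × ℤ)} {x y : ℂ} (hx : ‖x‖ ≤ 1)
    (hy : ‖y‖ ≤ 1) (n : ℕ) :
    ‖Pn S x y n‖ ≤ ((n : ℝ) + 1) ^ 2 * (S.card : ℝ) ^ n := by
  unfold Pn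
  calc ‖∑ i ∈ range (n + 1), ∑ j ∈ range (n + 1), (walkCount S i j n : ℂ) * x ^ i * y ^ j‖
      ≤ ∑ i ∈ range (n + 1), ∑ j ∈ range (n + 1), ‖(walkCount S i j n : ℂ) * x ^ i * y ^ j‖ :=
        (norm_sum_le _ _).trans (Finset.sum_le_sum fun i _ => norm_sum_le _ _)
    _ ≤ ∑ i ∈ range (n + 1), ∑ j ∈ range (n + 1), (S.card : ℝ) ^ n := by
        refine Finset.sum_le_sum fun i _ => Finset.sum_le_sum fun j _ => ?_
        rw [norm_mul, norm_mul, norm_pow, norm_pow, Complex.norm_natCast]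
        calc (walkCount S i j n : ℝ) * ‖x‖ ^ i * ‖y‖ ^ j
            ≤ (S.card : ℝ) ^ n * 1 * 1 := by
              refine mul_le_mul (mul_le_mul ?_ ?_ (by positivity) (by positivity)) ?_
                (by positivity) (by positivity)
              · exact_mod_cast walkCount_le S i j n
              · exact pow_le_one₀ (by positivity) hx
              · exact pow_le_one₀ (by positivity) hy
          _ = (S.card : ℝ) ^ n := by ring
    _ = ((n : ℝ) + 1) ^ 2 * (S.card : ℝ) ^ n := by
        rw [Finset.sum_const, Finset.sum_const, card_range, nsmul_eq_mul, nsmul_eq_mul]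
        push_cast; ring

lemma summable_zPn {S : Finset (ℤ × ℤ)} {x y z : ℂ} (hx : ‖x‖ ≤ 1)
    (hy : ‖y‖ ≤ 1) (hz : (S.card : ℝ) * ‖z‖ < 1) :
    Summable (fun n : ℕ => z ^ n * Pn S x y n) := by
  apply Summable.of_norm
  refine Summable.of_nonneg_of_le (fun n => norm_nonneg _) (fun n => ?_)
    ((summable_geom_sq (by positivity) hz).congr fun n => rfl)
  rw [norm_mul, norm_pow]
  calc ‖z‖ ^ n * ‖Pn S x y n‖ ≤ ‖z‖ ^ n * (((n : ℝ) + 1) ^ 2 * (S.card : ℝ) ^ n) := by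
        exact mul_le_mul_of_nonneg_left (Pn_norm_le hx hy n) (by positivity)
    _ = ((n : ℝ) + 1) ^ 2 * ((S.card : ℝ) * ‖z‖) ^ n := by
        rw [mul_pow]; ring

open Finset in
lemma genF_eq {S : Finset (ℤ × ℤ)} (hbS : ∀ p ∈ S, p.1 ≤ 1 ∧ p.2 ≤ 1)
    {x y z : ℂ} (hx : ‖x‖ ≤ 1) (hy : ‖y‖ ≤ 1)
    (hz : (S.card : ℝ) * ‖z‖ < 1) :
    genF S x y z = ∑' n : ℕ, z ^ n * Pn S x y n := by
  classical
  set r : ℝ := (S.card : ℝ) * ‖z‖ with hrdef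
  have hr0 : 0 ≤ r := by positivity
  set f : ℕ × ℕ × ℕ → ℂ := fun q =>
    (walkCount S (q.1 : ℤ) (q.2.1 : ℤ) q.2.2 : ℂ) * x ^ q.1 * y ^ q.2.1 * z ^ q.2.2 with hfdef
  set e : ℕ × (ℕ × ℕ) ≃ ℕ × ℕ × ℕ :=
    (Equiv.prodComm ℕ (ℕ × ℕ)).trans (Equiv.prodAssoc ℕ ℕ ℕ) with hedef
  have hee : ∀ n i j : ℕ, e (n, (i, j)) = (i, (j, n)) := fun n i j => rfl
  have hgle : ∀ q : ℕ × (ℕ × ℕ),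
      ‖f (e q)‖ ≤ (if q.2.1 ≤ q.1 ∧ q.2.2 ≤ q.1 then r ^ q.1 else 0) := by
    rintro ⟨n, i, j⟩
    dsimp only
    rw [hee]
    simp only [hfdef]
    split_ifs with hcond
    · rw [norm_mul, norm_mul, norm_mul, norm_pow, norm_pow, norm_pow, Complex.norm_natCast,
        hrdef, mul_pow]
      calc (walkCount S i j n : ℝ) * ‖x‖ ^ i * ‖y‖ ^ j * ‖z‖ ^ n
          ≤ (S.card : ℝ) ^ n * 1 * 1 * ‖z‖ ^ n := by
            refine mul_le_mul (mul_le_mul (mul_le_mul ?_ ?_ (by positivity) (by positivity))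
              ?_ (by positivity) (by positivity)) le_rfl (by positivity) (by positivity)
            · exact_mod_cast walkCount_le S i j n
            · exact pow_le_one₀ (by positivity) hx
            · exact pow_le_one₀ (by positivity) hy
        _ = (S.card : ℝ) ^ n * ‖z‖ ^ n := by ring
    · rw [walkCount_eq_zero S hbS _ _ _ (by push_cast; omega)]
      simp
  have hg : Summable (fun q : ℕ × (ℕ × ℕ) =>
      (if q.2.1 ≤ q.1 ∧ q.2.2 ≤ q.1 then r ^ q.1 else 0)) := by
    rw [summable_prod_of_nonneg (fun q => by dsimp only; split_ifs <;> positivity)]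
    constructor
    · intro n
      apply summable_of_ne_finset_zero (s := range (n + 1) ×ˢ range (n + 1))
      rintro ⟨i, j⟩ hij
      dsimp only
      rw [if_neg]
      simp only [Finset.mem_product, Finset.mem_range] at hij
      omega
    · refine (summable_geom_sq hr0 hz).congr fun n => ?_
      have : ∑' ij : ℕ × ℕ, (if ij.1 ≤ n ∧ ij.2 ≤ n then r ^ n else 0)
          = ((n : ℝ) + 1) ^ 2 * r ^ n := by
        rw [tsum_eq_sum (s := range (n + 1) ×ˢ range (n + 1)) (by
          rintro ⟨i, j⟩ hij
          dsimp only
          rw [if_neg]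
          simp only [Finset.mem_product, Finset.mem_range] at hij
          omega)]
        rw [Finset.sum_congr rfl (fun ij hij => by
          simp only [Finset.mem_product, Finset.mem_range] at hij
          rw [if_pos ⟨by omega, by omega⟩])]
        rw [Finset.sum_const, Finset.card_product, Finset.card_range, nsmul_eq_mul]
        push_cast; ring
      rw [this]
  have hfe : Summable (fun q => f (e q)) :=
    Summable.of_norm (Summable.of_nonneg_of_le (fun _ => norm_nonneg _) hgle hg)
  have hfsum : Summable f := (Equiv.summable_iff e).mp hfe
  calc genF S x y z = ∑' p : ℕ × ℕ × ℕ, f p := rfl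
    _ = ∑' q : ℕ × (ℕ × ℕ), f (e q) := (Equiv.tsum_eq e f).symm
    _ = ∑' n : ℕ, ∑' ij : ℕ × ℕ, f (e (n, ij)) := Summable.tsum_prod' hfe fun n => hfe.prod_factor n
    _ = ∑' n : ℕ, z ^ n * Pn S x y n := by
        refine tsum_congr fun n => ?_
        have hv : ∀ ij : ℕ × ℕ, ij ∉ range (n + 1) ×ˢ range (n + 1) → f (e (n, ij)) = 0 := by
          rintro ⟨i, j⟩ hij
          simp only [Finset.mem_product, Finset.mem_range] at hij
          rw [hee, hfdef]
          simp only
          rw [walkCount_eq_zero S hbS _ _ _ (by push_cast; omega)]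
          simp
        rw [tsum_eq_sum hv, Finset.sum_product]
        unfold Pn
        rw [Finset.mul_sum]
        refine Finset.sum_congr rfl fun i _ => ?_
        rw [Finset.mul_sum]
        refine Finset.sum_congr rfl fun j _ => ?_
        rw [hee, hfdef]
        ring

lemma FE {S : Finset (ℤ × ℤ)} (hbS : ∀ p ∈ S, p.1 ≤ 1 ∧ p.2 ≤ 1)
    (hco : ∀ p ∈ S, (p.1 = -1 ∨ p.1 = 0 ∨ p.1 = 1) ∧ (p.2 = -1 ∨ p.2 = 0 ∨ p.2 = 1))
    {x y z : ℂ} (hx : ‖x‖ ≤ 1) (hy : ‖y‖ ≤ 1)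
    (hz : (S.card : ℝ) * ‖z‖ < 1) :
    x * y * (genF S x y z - 1) =
      z * (∑ p ∈ S, x ^ (p.1 + 1) * y ^ (p.2 + 1)) * genF S x y z
        - ctpoly S y z * genF S 0 y z - cpoly S x z * genF S x 0 z
        + delta S * z * genF S 0 0 z := by
  have h0 : ‖(0 : ℂ)‖ ≤ 1 := by simp
  rw [genF_eq hbS hx hy hz, genF_eq hbS h0 hy hz, genF_eq hbS hx h0 hz, genF_eq hbS h0 h0 hz]
  set A : ℂ := ∑ p ∈ S, x ^ (p.1 + 1) * y ^ (p.2 + 1) with hA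
  set B : ℂ := ∑ p ∈ S.filter (fun p => p.1 = -1), y ^ (p.2 + 1) with hB
  set C : ℂ := ∑ p ∈ S.filter (fun p => p.2 = -1), x ^ (p.1 + 1) with hC
  have S1 : Summable (fun n => z ^ n * Pn S x y n) := summable_zPn hx hy hz
  have S2 : Summable (fun n => z ^ n * Pn S 0 y n) := summable_zPn h0 hy hz
  have S3 : Summable (fun n => z ^ n * Pn S x 0 n) := summable_zPn hx h0 hz
  have S4 : Summable (fun n => z ^ n * Pn S 0 0 n) := summable_zPn h0 h0 hz
  have hP0 : z ^ 0 * Pn S x y 0 = 1 := by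
    simp [Pn, walkCount_zero]
  have key : ∀ n : ℕ, x * y * (z ^ (n + 1) * Pn S x y (n + 1)) =
      (z * A) * (z ^ n * Pn S x y n) - (z * B) * (z ^ n * Pn S 0 y n)
        - (z * C) * (z ^ n * Pn S x 0 n) + (delta S * z) * (z ^ n * Pn S 0 0 n) := by
    intro n
    have h := Pn_succ hbS hco x y n
    calc x * y * (z ^ (n + 1) * Pn S x y (n + 1))
        = z ^ (n + 1) * (x * y * Pn S x y (n + 1)) := by ring
      _ = z ^ (n + 1) * (A * Pn S x y n - B * Pn S 0 y n - C * Pn S x 0 n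
            + delta S * Pn S 0 0 n) := by rw [h]
      _ = _ := by ring
  have hshift : ∀ (g : ℕ → ℂ), Summable g → Summable (fun n => g (n + 1)) := by
    intro g hg
    exact (summable_nat_add_iff 1).mpr hg
  calc x * y * ((∑' n, z ^ n * Pn S x y n) - 1)
      = x * y * (∑' n, z ^ (n + 1) * Pn S x y (n + 1)) := by
        rw [Summable.tsum_eq_zero_add S1, hP0]; ring
    _ = ∑' n, x * y * (z ^ (n + 1) * Pn S x y (n + 1)) := (tsum_mul_left).symm
    _ = ∑' n, ((z * A) * (z ^ n * Pn S x y n) - (z * B) * (z ^ n * Pn S 0 y n)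
          - (z * C) * (z ^ n * Pn S x 0 n) + (delta S * z) * (z ^ n * Pn S 0 0 n)) :=
        tsum_congr key
    _ = (z * A) * (∑' n, z ^ n * Pn S x y n) - (z * B) * (∑' n, z ^ n * Pn S 0 y n)
          - (z * C) * (∑' n, z ^ n * Pn S x 0 n)
          + (delta S * z) * (∑' n, z ^ n * Pn S 0 0 n) := by
        rw [Summable.tsum_add (((S1.mul_left (z * A)).sub (S2.mul_left (z * B))).sub
            (S3.mul_left (z * C))) (S4.mul_left (delta S * z)),
          Summable.tsum_sub ((S1.mul_left (z * A)).sub (S2.mul_left (z * B))) (S3.mul_left (z * C)),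
          Summable.tsum_sub (S1.mul_left (z * A)) (S2.mul_left (z * B)),
          tsum_mul_left, tsum_mul_left, tsum_mul_left, tsum_mul_left]
    _ = _ := by
        unfold ctpoly cpoly
        rw [← hB, ← hC]

/-- If `(x,y)` and `(x',y)` are two zeros of the kernel in the closed unit bidisc, then
`c(x';z)Q(x',0;z) − c(x;z)Q(x,0;z) = (x' − x)·y`. -/
theorem difference_on_kernel_zeros (S : Finset (ℤ × ℤ))
    (hS : S ⊆ ({-1, 0, 1} ×ˢ {-1, 0, 1} : Finset (ℤ × ℤ)) \ {((0 : ℤ), (0 : ℤ))})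
    (hk : 1 ≤ S.card)
    (x x' y z : ℂ) (hx : ‖x‖ ≤ 1) (hx' : ‖x'‖ ≤ 1)
    (hy : ‖y‖ ≤ 1) (hz : ‖z‖ < 1 / (S.card : ℝ))
    (hker : kernel S x y z = 0) (hker' : kernel S x' y z = 0) :
    cpoly S x' z * genF S x' 0 z - cpoly S x z * genF S x 0 z = (x' - x) * y := by
  have hco : ∀ p ∈ S, (p.1 = -1 ∨ p.1 = 0 ∨ p.1 = 1) ∧ (p.2 = -1 ∨ p.2 = 0 ∨ p.2 = 1) := by
    intro p hp
    have h := hS hp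
    rw [Finset.mem_sdiff, Finset.mem_product] at h
    obtain ⟨⟨h1, h2⟩, -⟩ := h
    simp only [Finset.mem_insert, Finset.mem_singleton] at h1 h2
    exact ⟨h1, h2⟩
  have hbS : ∀ p ∈ S, p.1 ≤ 1 ∧ p.2 ≤ 1 := by
    intro p hp
    obtain ⟨h1, h2⟩ := hco p hp
    constructor <;> omega
  have hk0 : (0 : ℝ) < (S.card : ℝ) := by exact_mod_cast hk
  have hzr : (S.card : ℝ) * ‖z‖ < 1 := by
    have := (mul_lt_mul_of_pos_left hz hk0)
    rwa [mul_one_div, div_self (ne_of_gt hk0)] at this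
  have hkA : z * (∑ p ∈ S, x ^ (p.1 + 1) * y ^ (p.2 + 1)) = x * y := by
    have h := hker
    unfold kernel at h
    linear_combination h
  have hkA' : z * (∑ p ∈ S, x' ^ (p.1 + 1) * y ^ (p.2 + 1)) = x' * y := by
    have h := hker'
    unfold kernel at h
    linear_combination h
  have hfe := FE hbS hco hx hy hzr
  have hfe' := FE hbS hco hx' hy hzr
  rw [hkA] at hfe
  rw [hkA'] at hfe'
  linear_combination hfe' - hfe
end

section
/- If the step set S is singular, then for every integer n ≥ 1 there is no walk of length n in the quarter plane with steps in S starting and ending at the origin: q(0,0;n) = 0 for all n ≥ 1. -/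
/-- For a singular walk, there is no nontrivial excursion from the origin back
to the origin: `q(0,0;n) = 0` for all `n ≥ 1`. -/
theorem no_excursion_of_singular (S : Finset (ℤ × ℤ))
    (hS : S ⊆ ({-1, 0, 1} ×ˢ {-1, 0, 1} : Finset (ℤ × ℤ)) \ {((0 : ℤ), (0 : ℤ))})
    (hsing : IsSingular S) :
    ∀ n : ℕ, 1 ≤ n → walkCount S 0 0 n = 0 := by
  intro n hn
  rw [walkCount, Finset.card_eq_zero, Finset.eq_empty_iff_forall_notMem]
  intro s hs
  rw [Finset.mem_filter] at hs
  obtain ⟨-, hpart, hsum⟩ := hs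
  -- every step has sum of coordinates ≥ 0
  have hstep : ∀ m : Fin n, 0 ≤ ((s m : ℤ × ℤ)).1 + ((s m : ℤ × ℤ)).2 := by
    intro m
    rcases hsing.2.2 _ (s m).2 with h | h | h | h | h <;> rw [h] <;> norm_num
  -- total sum of coordinate sums is 0
  have htot : ∑ m : Fin n, (((s m : ℤ × ℤ)).1 + ((s m : ℤ × ℤ)).2) = 0 := by
    rw [Finset.sum_add_distrib]
    have h1 : (∑ m : Fin n, ((s m : ℤ × ℤ))).1 = (0 : ℤ) := by rw [hsum]
    have h2 : (∑ m : Fin n, ((s m : ℤ × ℤ))).2 = (0 : ℤ) := by rw [hsum]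
    rw [Prod.fst_sum] at h1
    rw [Prod.snd_sum] at h2
    rw [h1, h2, add_zero]
  -- hence each step has coordinate sum 0, so is (−1,1) or (1,−1)
  have hzero : ∀ m : Fin n, ((s m : ℤ × ℤ)).1 + ((s m : ℤ × ℤ)).2 = 0 := by
    intro m
    have := (Finset.sum_eq_zero_iff_of_nonneg (fun m _ => hstep m)).mp htot
    exact this m (Finset.mem_univ m)
  have hdiag : ∀ m : Fin n, (s m : ℤ × ℤ) = (-1, 1) ∨ (s m : ℤ × ℤ) = (1, -1) := by
    intro m
    rcases hsing.2.2 _ (s m).2 with h | h | h | h | h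
    · exact Or.inl h
    · exact Or.inr h
    all_goals (exfalso; have := hzero m; rw [h] at this; norm_num at this)
  -- consider the first step
  have h0 : (0 : ℕ) < n := hn
  set l0 : Fin n := ⟨0, h0⟩ with hl0
  have hfilt : Finset.univ.filter (fun m : Fin n => m ≤ l0) = {l0} := by
    ext m
    simp only [Finset.mem_filter, Finset.mem_univ, true_and, Finset.mem_singleton]
    constructor
    · intro h
      exact le_antisymm h (Fin.mk_le_of_le_val (Nat.zero_le _))
    · intro h; exact h.le
  have hp := hpart l0
  rw [hfilt, Finset.sum_singleton, Finset.sum_singleton] at hp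
  rcases hdiag l0 with h | h <;> rw [h] at hp <;> norm_num at hp
end

section
/- Let ω₁ be a nonzero purely imaginary complex number and let ω₂, ω₃ be positive real numbers such that ω₃/ω₂ is irrational. Then there is no nonzero polynomial P ∈ ℂ[X,Y] such that P(℘(ω; ω₁,ω₂), ℘(ω; ω₁,ω₃)) = 0 for all ω ∈ ℂ ∖ (Λ(ω₁,ω₂) ∪ Λ(ω₁,ω₃)); that is, the two Weierstrass functions ℘(·; ω₁,ω₂) and ℘(·; ω₁,ω₃) are algebraically independent over ℂ. -/
/-- The Weierstrass elliptic function with periods `ω₁, ω₂`, defined by its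
classical series (junk values on the lattice). -/
noncomputable def wp (ω₁ ω₂ : ℂ) (z : ℂ) : ℂ :=
  1 / z ^ 2 +
    ∑' p : {p : ℤ × ℤ // p ≠ 0},
      (1 / (z - ((p.val.1 : ℂ) * ω₁ + (p.val.2 : ℂ) * ω₂)) ^ 2 -
        1 / ((p.val.1 : ℂ) * ω₁ + (p.val.2 : ℂ) * ω₂) ^ 2)

/-- Derivative of the Weierstrass elliptic function. -/
noncomputable def wpDeriv (ω₁ ω₂ : ℂ) (z : ℂ) : ℂ :=
  deriv (wp ω₁ ω₂) z

/-- Membership in the lattice `ℤω₁ + ℤω₂`. -/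
def inLattice (ω₁ ω₂ : ℂ) (z : ℂ) : Prop :=
  ∃ m n : ℤ, z = (m : ℂ) * ω₁ + (n : ℂ) * ω₂

/-- The invariant `g₂` of the lattice `ℤω₁ + ℤω₂`. -/
noncomputable def g2 (ω₁ ω₂ : ℂ) : ℂ :=
  60 * ∑' p : {p : ℤ × ℤ // p ≠ 0}, 1 / ((p.val.1 : ℂ) * ω₁ + (p.val.2 : ℂ) * ω₂) ^ 4

/-- The invariant `g₃` of the lattice `ℤω₁ + ℤω₂`. -/
noncomputable def g3 (ω₁ ω₂ : ℂ) : ℂ :=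
  140 * ∑' p : {p : ℤ × ℤ // p ≠ 0}, 1 / ((p.val.1 : ℂ) * ω₁ + (p.val.2 : ℂ) * ω₂) ^ 6


set_option maxHeartbeats 1000000

noncomputable section WPaux

def latp (ω₁ : ℂ) (ω : ℝ) (p : ℤ × ℤ) : ℂ := (p.1 : ℂ) * ω₁ + (p.2 : ℂ) * (ω : ℂ)

def wterm (ω₁ : ℂ) (ω : ℝ) (z : ℂ) (p : ℤ × ℤ) : ℂ :=
  1 / (z - latp ω₁ ω p) ^ 2 - 1 / (latp ω₁ ω p) ^ 2

lemma bound10 {z l : ℂ} (hne : l ≠ 0) (h : 2 * ‖z‖ ≤ ‖l‖) :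
    ‖1 / (z - l) ^ 2 - 1 / l ^ 2‖ ≤ 10 * ‖z‖ / ‖l‖ ^ 3 := by
  have hl : 0 < ‖l‖ := norm_pos_iff.mpr hne
  have hz2 : ‖z‖ ≤ ‖l‖ / 2 := by linarith
  have hzl : ‖l‖ / 2 ≤ ‖z - l‖ := by
    have h1 : ‖l‖ - ‖z‖ ≤ ‖z - l‖ := by
      have := norm_sub_norm_le l z
      simpa [norm_sub_rev] using this
    linarith
  have hne2 : z - l ≠ 0 := by
    intro h0
    rw [h0, norm_zero] at hzl; linarith
  have key : 1 / (z - l) ^ 2 - 1 / l ^ 2 = z * (2 * l - z) / ((z - l) ^ 2 * l ^ 2) := by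
    field_simp
    ring
  rw [key, norm_div, norm_mul, norm_mul, norm_pow, norm_pow]
  have h2lz : ‖2 * l - z‖ ≤ 5 / 2 * ‖l‖ := by
    have := norm_sub_le (2 * l) z
    have h2 : ‖(2 : ℂ) * l‖ = 2 * ‖l‖ := by
      rw [norm_mul]; norm_num
    linarith
  have hnum : ‖z‖ * ‖2 * l - z‖ ≤ ‖z‖ * (5 / 2 * ‖l‖) :=
    mul_le_mul_of_nonneg_left h2lz (norm_nonneg z)
  have hsq : (‖l‖ / 2) ^ 2 ≤ ‖z - l‖ ^ 2 := pow_le_pow_left₀ (by positivity) hzl 2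
  have hden : ‖l‖ ^ 4 / 4 ≤ ‖z - l‖ ^ 2 * ‖l‖ ^ 2 := by nlinarith
  have hden0 : 0 < ‖l‖ ^ 4 / 4 := by positivity
  calc ‖z‖ * ‖2 * l - z‖ / (‖z - l‖ ^ 2 * ‖l‖ ^ 2)
      ≤ ‖z‖ * (5 / 2 * ‖l‖) / (‖l‖ ^ 4 / 4) :=
        div_le_div₀ (by positivity) hnum hden0 hden
    _ = 10 * ‖z‖ / ‖l‖ ^ 3 := by
        rw [div_eq_div_iff (by positivity) (by positivity)]
        ring

lemma finite_int_lt (R : ℝ) : {n : ℤ | ¬ R ≤ |(n : ℝ)|}.Finite := by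
  apply Set.Finite.subset (Set.finite_Icc (-(⌈R⌉)) ⌈R⌉)
  intro n hn
  simp only [Set.mem_setOf_eq, not_le] at hn
  have h2 : |n| ≤ ⌈R⌉ := by
    have hceil := Int.le_ceil R
    have hx : |(n : ℝ)| ≤ (⌈R⌉ : ℝ) := by linarith
    exact_mod_cast hx
  rw [abs_le] at h2
  exact h2

lemma summable_int_line (w : ℂ) (ωr : ℝ) (hω : 0 < ωr) :
    Summable fun n : ℤ => 1 / (w - (n : ℂ) * (ωr : ℂ)) ^ 2 := by
  have hg : Summable fun n : ℤ => 4 / ωr ^ 2 * (1 / (n : ℝ) ^ 2) :=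
    (Real.summable_one_div_int_pow.mpr one_lt_two).mul_left _
  apply Summable.of_norm_bounded_eventually hg
  rw [Filter.eventually_cofinite]
  apply Set.Finite.subset (finite_int_lt (2 * (‖w‖ + 1) / ωr))
  intro n hn
  simp only [Set.mem_setOf_eq] at hn ⊢
  intro hR
  apply hn
  have hnω : 2 * (‖w‖ + 1) ≤ |(n : ℝ)| * ωr := by
    rw [div_le_iff₀ hω] at hR; linarith
  have hn0 : (0:ℝ) < |(n:ℝ)| := by
    by_contra hc
    push_neg at hc
    have : |(n:ℝ)| = 0 := le_antisymm hc (abs_nonneg _)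
    rw [this] at hnω
    nlinarith [norm_nonneg w]
  have hlow : |(n : ℝ)| * ωr / 2 ≤ ‖w - (n : ℂ) * (ωr : ℂ)‖ := by
    have h1 : ‖(n : ℂ) * (ωr : ℂ)‖ - ‖w‖ ≤ ‖w - (n : ℂ) * (ωr : ℂ)‖ := by
      have := norm_sub_norm_le ((n : ℂ) * (ωr : ℂ)) w
      simpa [norm_sub_rev] using this
    have h2 : ‖(n : ℂ) * (ωr : ℂ)‖ = |(n : ℝ)| * ωr := by
      rw [norm_mul]
      simp [Complex.norm_real, Complex.norm_intCast, abs_of_pos hω]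
    rw [h2] at h1
    linarith
  have hpos : (0:ℝ) < |(n : ℝ)| * ωr / 2 := by positivity
  rw [norm_div, norm_one, norm_pow]
  rw [div_le_iff₀ (pow_pos (lt_of_lt_of_le hpos hlow) 2)]
  have hn2 : (4 / ωr ^ 2 * (1 / (n : ℝ) ^ 2)) * (|(n:ℝ)| * ωr / 2) ^ 2 = 1 := by
    have hnne : (n:ℝ) ≠ 0 := abs_pos.mp hn0
    have hsq : |(n:ℝ)|^2 = (n:ℝ)^2 := sq_abs _
    field_simp
    nlinarith [sq_abs ((n:ℝ))]
  calc (1:ℝ) ≤ (4 / ωr ^ 2 * (1 / (n : ℝ) ^ 2)) * (|(n:ℝ)| * ωr / 2) ^ 2 := le_of_eq hn2.symm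
    _ ≤ (4 / ωr ^ 2 * (1 / (n : ℝ) ^ 2)) * ‖w - (n : ℂ) * (ωr : ℂ)‖ ^ 2 := by
        apply mul_le_mul_of_nonneg_left _ (by positivity)
        exact pow_le_pow_left₀ (le_of_lt hpos) hlow 2


/-- `M p` : sup-norm of the integer vector. -/
def Mfun (p : ℤ × ℤ) : ℝ := (max p.1.natAbs p.2.natAbs : ℕ)

lemma Mfun_nonneg (p : ℤ × ℤ) : 0 ≤ Mfun p := Nat.cast_nonneg _

lemma one_le_Mfun {p : ℤ × ℤ} (hp : p ≠ 0) : 1 ≤ Mfun p := by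
  have h : 1 ≤ max p.1.natAbs p.2.natAbs := by
    by_contra h
    push_neg at h
    have h0 : max p.1.natAbs p.2.natAbs = 0 := Nat.lt_one_iff.mp h
    have h1 := Nat.max_eq_zero_iff.mp h0
    exact hp (Prod.ext (Int.natAbs_eq_zero.mp h1.1) (Int.natAbs_eq_zero.mp h1.2))
  unfold Mfun
  exact_mod_cast h

lemma norm_latp_ge (ω₁ : ℂ) (hre : ω₁.re = 0) (ω : ℝ) (hω : 0 < ω) (p : ℤ × ℤ) :
    min |ω₁.im| ω * Mfun p ≤ ‖latp ω₁ ω p‖ := by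
  set c := min |ω₁.im| ω with hc
  have hc0 : 0 ≤ c := le_min (abs_nonneg _) hω.le
  have hre' : (latp ω₁ ω p).re = p.2 * ω := by
    simp [latp, Complex.add_re, Complex.mul_re, hre]
  have him' : (latp ω₁ ω p).im = p.1 * ω₁.im := by
    simp [latp, Complex.add_im, Complex.mul_im, hre]
  have h1 : |(p.1 : ℝ)| * |ω₁.im| ≤ ‖latp ω₁ ω p‖ := by
    have := Complex.abs_im_le_norm (latp ω₁ ω p)
    rw [him'] at this
    rw [abs_mul] at this
    exact this
  have h2 : |(p.2 : ℝ)| * ω ≤ ‖latp ω₁ ω p‖ := by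
    have := Complex.abs_re_le_norm (latp ω₁ ω p)
    rw [hre'] at this
    rw [abs_mul, abs_of_pos hω] at this
    exact this
  have hM : Mfun p = max |(p.1 : ℝ)| |(p.2 : ℝ)| := by
    simp [Mfun, Nat.cast_max, Nat.cast_natAbs]
  rw [hM]
  rcases max_cases |(p.1 : ℝ)| |(p.2 : ℝ)| with ⟨h, _⟩ | ⟨h, _⟩
  · rw [h]
    calc c * |(p.1 : ℝ)| ≤ |ω₁.im| * |(p.1 : ℝ)| :=
        mul_le_mul_of_nonneg_right (min_le_left _ _) (abs_nonneg _)
      _ = |(p.1 : ℝ)| * |ω₁.im| := mul_comm _ _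
      _ ≤ _ := h1
  · rw [h]
    calc c * |(p.2 : ℝ)| ≤ ω * |(p.2 : ℝ)| :=
        mul_le_mul_of_nonneg_right (min_le_right _ _) (abs_nonneg _)
      _ = |(p.2 : ℝ)| * ω := mul_comm _ _
      _ ≤ _ := h2

lemma summable_Minv : Summable (fun p : ℤ × ℤ => (Mfun p ^ 3)⁻¹) := by
  have h := EisensteinSeries.summable_one_div_norm_rpow (k := 3) (by norm_num)
  have h2 : Summable ((fun x : Fin 2 → ℤ => ‖x‖ ^ (-(3:ℝ))) ∘ (fun p : ℤ × ℤ => ![p.1, p.2])) := by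
    apply h.comp_injective
    intro p q hpq
    have h0 := congrFun hpq 0
    have h1 := congrFun hpq 1
    simp at h0 h1
    exact Prod.ext h0 h1
  apply h2.congr
  intro p
  simp only [Function.comp_apply]
  rw [EisensteinSeries.norm_eq_max_natAbs]
  simp only [Matrix.cons_val_zero, Matrix.cons_val_one, Matrix.head_cons]
  have hge : (0:ℝ) ≤ ((max p.1.natAbs p.2.natAbs : ℕ) : ℝ) := Nat.cast_nonneg _
  rw [show (-(3:ℝ)) = -((3:ℕ):ℝ) by norm_num, Real.rpow_neg hge, Real.rpow_natCast]
  rfl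

lemma finite_M_lt (R : ℝ) : {p : ℤ × ℤ | ¬ R ≤ Mfun p}.Finite := by
  apply Set.Finite.subset (Set.finite_Icc ((-(⌈R⌉), -(⌈R⌉)) : ℤ × ℤ) (⌈R⌉, ⌈R⌉))
  intro p hp
  simp only [Set.mem_setOf_eq, not_le] at hp
  have hceil := Int.le_ceil R
  have key : ∀ k : ℤ, (k.natAbs : ℝ) ≤ Mfun p → -(⌈R⌉) ≤ k ∧ k ≤ ⌈R⌉ := by
    intro k hk
    have h1 : |(k : ℝ)| ≤ Mfun p := by
      rwa [Nat.cast_natAbs, Int.cast_abs] at hk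
    have h2 : |(k : ℝ)| < (⌈R⌉ : ℝ) := lt_of_le_of_lt h1 (lt_of_lt_of_le hp hceil)
    have h3 : |k| ≤ ⌈R⌉ := by exact_mod_cast h2.le
    rw [abs_le] at h3
    exact h3
  have k1 := key p.1 (by exact_mod_cast Nat.cast_le.mpr (le_max_left _ _))
  have k2 := key p.2 (by exact_mod_cast Nat.cast_le.mpr (le_max_right _ _))
  constructor
  · exact ⟨k1.1, k2.1⟩
  · exact ⟨k1.2, k2.2⟩

lemma summable_wterm (ω₁ : ℂ) (h₁ : ω₁ ≠ 0) (hre : ω₁.re = 0) (ω : ℝ) (hω : 0 < ω) (z : ℂ) :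
    Summable (wterm ω₁ ω z) := by
  have hb : ω₁.im ≠ 0 := by
    intro h
    exact h₁ (Complex.ext hre h)
  set c := min |ω₁.im| ω with hc
  have hc0 : 0 < c := lt_min (abs_pos.mpr hb) hω
  have hg : Summable fun p : ℤ × ℤ => (10 * ‖z‖ / c ^ 3) * (Mfun p ^ 3)⁻¹ :=
    summable_Minv.mul_left _
  apply Summable.of_norm_bounded_eventually hg
  rw [Filter.eventually_cofinite]
  apply Set.Finite.subset (finite_M_lt ((2 * ‖z‖ + 1) / c))
  intro p hp
  simp only [Set.mem_setOf_eq] at hp ⊢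
  intro hR
  apply hp
  have hcM : 2 * ‖z‖ + 1 ≤ c * Mfun p := by
    rw [div_le_iff₀ hc0] at hR
    linarith [mul_comm (Mfun p) c]
  have hM0 : 0 < c * Mfun p := by nlinarith [norm_nonneg z]
  have hlatge : c * Mfun p ≤ ‖latp ω₁ ω p‖ := norm_latp_ge ω₁ hre ω hω p
  have hlat0 : latp ω₁ ω p ≠ 0 := by
    rw [← norm_pos_iff]
    linarith
  have h2z : 2 * ‖z‖ ≤ ‖latp ω₁ ω p‖ := by linarith [norm_nonneg z]
  calc ‖wterm ω₁ ω z p‖ ≤ 10 * ‖z‖ / ‖latp ω₁ ω p‖ ^ 3 := bound10 hlat0 h2z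
    _ ≤ 10 * ‖z‖ / (c * Mfun p) ^ 3 := by
        apply div_le_div_of_nonneg_left (by positivity) (by positivity)
        exact pow_le_pow_left₀ hM0.le hlatge 3
    _ = (10 * ‖z‖ / c ^ 3) * (Mfun p ^ 3)⁻¹ := by
        rw [mul_pow]
        field_simp
  

-- the subtype equivalence
def eqv0 : {p : ℤ × ℤ // p ≠ 0} ≃ ↑((↑({((0:ℤ),(0:ℤ))} : Finset (ℤ × ℤ)) : Set (ℤ × ℤ))ᶜ) :=
  Equiv.subtypeEquivRight (by
    intro p
    simp [Prod.ext_iff])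

lemma wp_tail_eq (ω₁ : ℂ) (ω : ℝ) (z : ℂ) :
    (∑' p : {p : ℤ × ℤ // p ≠ 0}, wterm ω₁ ω z p.val)
      = ∑' p : ↑((↑({((0:ℤ),(0:ℤ))} : Finset (ℤ × ℤ)) : Set (ℤ × ℤ))ᶜ), wterm ω₁ ω z p.val := by
  exact eqv0.tsum_eq (fun p => wterm ω₁ ω z p.val) |>.symm ▸ rfl

lemma wp_eq_subtype_tsum (ω₁ : ℂ) (ω : ℝ) (z : ℂ) :
    wp ω₁ (ω : ℂ) z = 1 / z ^ 2 + ∑' p : {p : ℤ × ℤ // p ≠ 0}, wterm ω₁ ω z p.val := rfl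

lemma wp_eq_full_tsum (ω₁ : ℂ) (h₁ : ω₁ ≠ 0) (hre : ω₁.re = 0) (ω : ℝ) (hω : 0 < ω) (z : ℂ) :
    wp ω₁ (ω : ℂ) z = ∑' p : ℤ × ℤ, wterm ω₁ ω z p := by
  have hs := summable_wterm ω₁ h₁ hre ω hω z
  have key := Summable.sum_add_tsum_compl (s := ({((0:ℤ),(0:ℤ))} : Finset (ℤ × ℤ))) hs
  rw [wp_eq_subtype_tsum]
  rw [← key]
  congr 1
  · simp [wterm, latp]
  · rw [← eqv0.tsum_eq (fun p => wterm ω₁ ω z p.val)]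
    rfl

lemma latp_shift (ω₁ : ℂ) (ω : ℝ) (z : ℂ) (p : ℤ × ℤ) :
    (z + ω) - latp ω₁ ω p = z - latp ω₁ ω (p.1, p.2 - 1) := by
  simp only [latp]
  push_cast
  ring

lemma wp_period (ω₁ : ℂ) (h₁ : ω₁ ≠ 0) (hre : ω₁.re = 0) (ω : ℝ) (hω : 0 < ω) (z : ℂ) :
    wp ω₁ (ω : ℂ) (z + ω) = wp ω₁ (ω : ℂ) z := by
  have T1 := summable_wterm ω₁ h₁ hre ω hω (z + ω)
  have T2 := summable_wterm ω₁ h₁ hre ω hω z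
  rw [wp_eq_full_tsum ω₁ h₁ hre ω hω, wp_eq_full_tsum ω₁ h₁ hre ω hω]
  have hsub : (∑' p : ℤ × ℤ, (wterm ω₁ ω (z + ω) p - wterm ω₁ ω z p))
      = (∑' p : ℤ × ℤ, wterm ω₁ ω (z + ω) p) - ∑' p : ℤ × ℤ, wterm ω₁ ω z p :=
    T1.tsum_sub T2
  have hzero : (∑' p : ℤ × ℤ, (wterm ω₁ ω (z + ω) p - wterm ω₁ ω z p)) = 0 := by
    have hptw : ∀ p : ℤ × ℤ, wterm ω₁ ω (z + ω) p - wterm ω₁ ω z p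
        = 1 / (z - latp ω₁ ω (p.1, p.2 - 1)) ^ 2 - 1 / (z - latp ω₁ ω p) ^ 2 := by
      intro p
      simp only [wterm]
      rw [latp_shift]
      ring
    rw [tsum_congr hptw]
    have hsummable : Summable (fun p : ℤ × ℤ =>
        1 / (z - latp ω₁ ω (p.1, p.2 - 1)) ^ 2 - 1 / (z - latp ω₁ ω p) ^ 2) := by
      apply Summable.congr (T1.sub T2)
      intro p
      exact hptw p
    rw [Summable.tsum_prod hsummable]
    have inner_zero : ∀ m : ℤ, (∑' n : ℤ,
        (1 / (z - latp ω₁ ω ((m, n).1, (m, n).2 - 1)) ^ 2 - 1 / (z - latp ω₁ ω (m, n)) ^ 2)) = 0 := by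
      intro m
      have hline : Summable fun n : ℤ => 1 / (z - latp ω₁ ω (m, n)) ^ 2 := by
        apply Summable.congr (summable_int_line (z - (m : ℂ) * ω₁) ω hω)
        intro n
        congr 2
        simp only [latp]
        ring
      have hline' : Summable fun n : ℤ => 1 / (z - latp ω₁ ω (m, n - 1)) ^ 2 :=
        hline.comp_injective sub_left_injective
      rw [Summable.tsum_sub hline' hline]
      rw [sub_eq_zero]
      have := (Equiv.subRight (1 : ℤ)).tsum_eq (fun n => 1 / (z - latp ω₁ ω (m, n)) ^ 2)
      simpa [Equiv.subRight] using this
    calc (∑' (m : ℤ) (n : ℤ),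
          (1 / (z - latp ω₁ ω ((m, n).1, (m, n).2 - 1)) ^ 2 - 1 / (z - latp ω₁ ω (m, n)) ^ 2))
        = ∑' (m : ℤ), (0 : ℂ) := by
          apply tsum_congr
          intro m
          exact inner_zero m
      _ = 0 := tsum_zero
  rw [hsub] at hzero
  exact sub_eq_zero.mp hzero
  

/-- Uniform bound for the tail near `0`, and resulting blow-up of `wp`. -/
lemma wp_lower_bound (ω₁ : ℂ) (h₁ : ω₁ ≠ 0) (hre : ω₁.re = 0) (ω : ℝ) (hω : 0 < ω) :
    ∃ C : ℝ, 0 ≤ C ∧ ∀ z : ℂ, z ≠ 0 → ‖z‖ ≤ min |ω₁.im| ω / 2 →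
      (‖z‖ ^ 2)⁻¹ - C ≤ ‖wp ω₁ (ω : ℂ) z‖ := by
  have hb : ω₁.im ≠ 0 := fun h => h₁ (Complex.ext hre h)
  set c := min |ω₁.im| ω with hc
  have hc0 : 0 < c := lt_min (abs_pos.mpr hb) hω
  set g : ℤ × ℤ → ℝ := fun p => (10 * (c / 2) / c ^ 3) * (Mfun p ^ 3)⁻¹ with hg
  have hgs : Summable g := summable_Minv.mul_left _
  have hgs' : Summable fun p : {p : ℤ × ℤ // p ≠ 0} => g p.val := hgs.subtype _
  refine ⟨∑' p : {p : ℤ × ℤ // p ≠ 0}, g p.val, tsum_nonneg (fun p => mul_nonneg (by positivity) (inv_nonneg.mpr (pow_nonneg (Mfun_nonneg _) 3))), ?_⟩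
  intro z hz0 hzle
  have key : ∀ p : {p : ℤ × ℤ // p ≠ 0}, ‖wterm ω₁ ω z p.val‖ ≤ g p.val := by
    intro p
    have hM1 : 1 ≤ Mfun p.val := one_le_Mfun p.2
    have hlat : c * Mfun p.val ≤ ‖latp ω₁ ω p.val‖ := norm_latp_ge ω₁ hre ω hω p.val
    have hcM : c ≤ c * Mfun p.val := by nlinarith
    have hlat0 : latp ω₁ ω p.val ≠ 0 := by
      rw [← norm_pos_iff]; linarith
    have h2z : 2 * ‖z‖ ≤ ‖latp ω₁ ω p.val‖ := by
      have : 2 * ‖z‖ ≤ c := by linarith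
      linarith
    calc ‖wterm ω₁ ω z p.val‖ ≤ 10 * ‖z‖ / ‖latp ω₁ ω p.val‖ ^ 3 := bound10 hlat0 h2z
      _ ≤ 10 * (c / 2) / (c * Mfun p.val) ^ 3 := by
          apply div_le_div₀ (by positivity) (by linarith) (by positivity)
          exact pow_le_pow_left₀ (by positivity) hlat 3
      _ = g p.val := by
          rw [hg]
          rw [mul_pow]
          field_simp
  have hsum : Summable fun p : {p : ℤ × ℤ // p ≠ 0} => ‖wterm ω₁ ω z p.val‖ :=
    Summable.of_nonneg_of_le (fun p => norm_nonneg _) key hgs'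
  have htail : ‖∑' p : {p : ℤ × ℤ // p ≠ 0}, wterm ω₁ ω z p.val‖
      ≤ ∑' p : {p : ℤ × ℤ // p ≠ 0}, g p.val := by
    calc ‖∑' p : {p : ℤ × ℤ // p ≠ 0}, wterm ω₁ ω z p.val‖
        ≤ ∑' p : {p : ℤ × ℤ // p ≠ 0}, ‖wterm ω₁ ω z p.val‖ := norm_tsum_le_tsum_norm hsum
      _ ≤ _ := Summable.tsum_le_tsum key hsum hgs'
  rw [wp_eq_subtype_tsum]
  have h1 : ‖(1 : ℂ) / z ^ 2‖ = (‖z‖ ^ 2)⁻¹ := by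
    rw [norm_div, norm_one, norm_pow, one_div]
  set S := ∑' p : {p : ℤ × ℤ // p ≠ 0}, wterm ω₁ ω z p.val with hSdef
  have h2 : ‖(1:ℂ) / z ^ 2‖ ≤ ‖1 / z ^ 2 + S‖ + ‖S‖ := by
    have h3 := norm_sub_le ((1:ℂ) / z ^ 2 + S) S
    simpa using h3
  rw [h1] at h2
  linarith

/-- real points strictly between 0 and ω are not in the lattice -/
lemma real_not_inLattice (ω₁ : ℂ) (h₁ : ω₁ ≠ 0) (hre : ω₁.re = 0) (ω : ℝ) (hω : 0 < ω)
    {t : ℝ} (ht0 : 0 < t) (htω : t < ω) : ¬ inLattice ω₁ (ω : ℂ) (t : ℂ) := by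
  have hb : ω₁.im ≠ 0 := fun h => h₁ (Complex.ext hre h)
  rintro ⟨m, n, hmn⟩
  have him : (0:ℝ) = m * ω₁.im := by
    have := congrArg Complex.im hmn
    simpa [Complex.add_im, Complex.mul_im, hre] using this
  have hm : (m:ℝ) = 0 := by
    rcases mul_eq_zero.mp him.symm with h | h
    · exact h
    · exact absurd h hb
  have hm0 : m = 0 := by exact_mod_cast hm
  have hret : t = n * ω := by
    have := congrArg Complex.re hmn
    simpa [Complex.add_re, Complex.mul_re, hre, hm0] using this
  have hn0 : 0 < (n:ℝ) := by
    by_contra hcon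
    push_neg at hcon
    nlinarith
  have hn1 : 1 ≤ (n:ℝ) := by exact_mod_cast (by exact_mod_cast hn0 : (0:ℤ) < n)
  nlinarith

/-- lattice is stable under shifts by ω -/
lemma inLattice_shift_iff (ω₁ : ℂ) (ω : ℝ) (z : ℂ) (k : ℤ) :
    inLattice ω₁ (ω : ℂ) (z + (k : ℂ) * ω) ↔ inLattice ω₁ (ω : ℂ) z := by
  constructor
  · rintro ⟨m, n, h⟩
    refine ⟨m, n - k, ?_⟩
    have : z = (m : ℂ) * ω₁ + (n : ℂ) * ω - (k : ℂ) * ω := by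
      rw [← h]; ring
    rw [this]; push_cast; ring
  · rintro ⟨m, n, h⟩
    refine ⟨m, n + k, ?_⟩
    rw [h]; push_cast; ring


lemma wp_shift (ω₁ : ℂ) (h₁ : ω₁ ≠ 0) (hre : ω₁.re = 0) (ω : ℝ) (hω : 0 < ω) (z : ℂ) (k : ℤ) :
    wp ω₁ (ω : ℂ) (z + (k : ℂ) * ω) = wp ω₁ (ω : ℂ) z := by
  induction k using Int.induction_on with
  | zero => simp
  | succ k ih =>
      have h1 : z + (((k : ℤ) + 1 : ℤ) : ℂ) * (ω : ℂ) = (z + ((k : ℤ) : ℂ) * ω) + ω := by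
        push_cast; ring
      rw [h1, wp_period ω₁ h₁ hre ω hω, ih]
  | pred k ih =>
      have h2 := wp_period ω₁ h₁ hre ω hω (z + ((-(k : ℤ) - 1 : ℤ) : ℂ) * (ω : ℂ))
      have h1 : z + ((-(k : ℤ) - 1 : ℤ) : ℂ) * (ω : ℂ) + ω = z + ((-(k : ℤ) : ℤ) : ℂ) * ω := by
        push_cast; ring
      rw [h1] at h2
      rw [← h2]
      exact ih

lemma dense_combination {ω₂ ω₃ : ℝ} (h₂ : 0 < ω₂) (h₃ : 0 < ω₃)
    (hirr : Irrational (ω₃ / ω₂)) {lo hi : ℝ} (hlt : lo < hi) :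
    ∃ a b : ℤ, lo < a * ω₂ + b * ω₃ ∧ a * ω₂ + b * ω₃ < hi := by
  set S := AddSubgroup.closure ({ω₂, ω₃} : Set ℝ) with hS
  have hdense : Dense (S : Set ℝ) := by
    rcases AddSubgroup.dense_or_cyclic S with h | ⟨a, ha⟩
    · exact h
    · exfalso
      have hω₂S : ω₂ ∈ S := AddSubgroup.subset_closure (by simp)
      have hω₃S : ω₃ ∈ S := AddSubgroup.subset_closure (by simp)
      rw [ha] at hω₂S hω₃S
      rcases AddSubgroup.mem_closure_singleton.mp hω₂S with ⟨n, hn⟩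
      rcases AddSubgroup.mem_closure_singleton.mp hω₃S with ⟨m, hm⟩
      have hn0 : (n : ℝ) ≠ 0 := by
        intro h
        have hnz : n = 0 := by exact_mod_cast h
        rw [hnz] at hn
        simp at hn
        linarith
      have ha0 : a ≠ 0 := by
        intro h
        rw [h] at hn
        simp at hn
        linarith
      apply hirr
      refine ⟨(m : ℚ) / (n : ℚ), ?_⟩
      have hsmul_n : (n : ℝ) * a = ω₂ := by
        rw [← hn]; simp [zsmul_eq_mul]
      have hsmul_m : (m : ℝ) * a = ω₃ := by
        rw [← hm]; simp [zsmul_eq_mul]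
      have key : ω₃ / ω₂ = (m : ℝ) / (n : ℝ) := by
        rw [← hsmul_n, ← hsmul_m, mul_comm (m:ℝ) a, mul_comm (n:ℝ) a,
          mul_div_mul_left _ _ ha0]
      rw [key]
      push_cast
      ring
  have hex : ∃ s ∈ (S : Set ℝ), s ∈ Set.Ioo lo hi := by
    rcases hdense.exists_between hlt with ⟨s, hs1, hs2⟩
    exact ⟨s, hs1, hs2⟩
  rcases hex with ⟨s, hsS, hs⟩
  rcases AddSubgroup.mem_closure_pair.mp (by rwa [hS] at hsS) with ⟨a, b, hab⟩
  refine ⟨a, b, ?_, ?_⟩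
  · rw [show (a:ℝ) * ω₂ + (b:ℝ) * ω₃ = a • ω₂ + b • ω₃ by simp [zsmul_eq_mul]]
    rw [hab]; exact hs.1
  · rw [show (a:ℝ) * ω₂ + (b:ℝ) * ω₃ = a • ω₂ + b • ω₃ by simp [zsmul_eq_mul]]
    rw [hab]; exact hs.2

lemma inv_sq_big {B w : ℝ} (hB : 0 < B) (hw0 : 0 < w) (hw : w ≤ (Real.sqrt B)⁻¹) :
    B ≤ (w ^ 2)⁻¹ := by
  have hsB : 0 < Real.sqrt B := Real.sqrt_pos.mpr hB
  have h1 : w ^ 2 ≤ ((Real.sqrt B)⁻¹) ^ 2 := pow_le_pow_left₀ hw0.le hw 2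
  have h2 : ((Real.sqrt B)⁻¹) ^ 2 = B⁻¹ := by rw [inv_pow, Real.sq_sqrt hB.le]
  rw [h2] at h1
  calc B = (B⁻¹)⁻¹ := (inv_inv B).symm
    _ ≤ (w ^ 2)⁻¹ := by
        apply inv_anti₀ (by positivity) h1

lemma norm_ofReal_pos {t : ℝ} (ht : 0 < t) : ‖(t : ℂ)‖ = t := by
  rw [Complex.norm_real, Real.norm_eq_abs, abs_of_pos ht]

-- polynomial helpers
lemma hQdef (P : MvPolynomial (Fin 2) ℂ) (x : ℂ) :
    (Polynomial.mapAlgHom (Polynomial.aeval x : Polynomial ℂ →ₐ[ℂ] ℂ))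
        ((MvPolynomial.aeval (![Polynomial.C Polynomial.X, Polynomial.X] : Fin 2 → Polynomial (Polynomial ℂ))) P)
      = MvPolynomial.aeval ![Polynomial.C x, (Polynomial.X : Polynomial ℂ)] P := by
  have h : (Polynomial.mapAlgHom (Polynomial.aeval x : Polynomial ℂ →ₐ[ℂ] ℂ)).comp
      (MvPolynomial.aeval (![Polynomial.C Polynomial.X, Polynomial.X] : Fin 2 → Polynomial (Polynomial ℂ)))
      = MvPolynomial.aeval ![Polynomial.C x, (Polynomial.X : Polynomial ℂ)] := by
    apply MvPolynomial.algHom_ext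
    intro i
    fin_cases i <;>
      simp [Polynomial.mapAlgHom, Polynomial.map_C]
  exact AlgHom.congr_fun h P

lemma hEvalLem (P : MvPolynomial (Fin 2) ℂ) (x y : ℂ) :
    Polynomial.eval y (MvPolynomial.aeval ![Polynomial.C x, (Polynomial.X : Polynomial ℂ)] P)
      = MvPolynomial.eval ![x, y] P := by
  have h : ((Polynomial.aeval y : Polynomial ℂ →ₐ[ℂ] ℂ)).comp
      (MvPolynomial.aeval ![Polynomial.C x, (Polynomial.X : Polynomial ℂ)])
      = MvPolynomial.aeval ![x, y] := by
    apply MvPolynomial.algHom_ext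
    intro i
    fin_cases i <;> simp
  have h2 := AlgHom.congr_fun h P
  simp only [AlgHom.coe_comp, Function.comp_apply] at h2
  have e1 : (Polynomial.aeval y)
      ((MvPolynomial.aeval ![Polynomial.C x, (Polynomial.X : Polynomial ℂ)]) P)
      = Polynomial.eval y ((MvPolynomial.aeval ![Polynomial.C x, (Polynomial.X : Polynomial ℂ)]) P) := by
    rw [Polynomial.aeval_def, Polynomial.eval₂_eq_eval_map, Algebra.algebraMap_self,
      Polynomial.map_id]
  calc Polynomial.eval y ((MvPolynomial.aeval ![Polynomial.C x, (Polynomial.X : Polynomial ℂ)]) P)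
      = (Polynomial.aeval y) ((MvPolynomial.aeval ![Polynomial.C x, (Polynomial.X : Polynomial ℂ)]) P) := e1.symm
    _ = (MvPolynomial.aeval ![x, y]) P := h2
    _ = MvPolynomial.eval ![x, y] P := rfl

end WPaux

/-- If `ω₃/ω₂` is irrational, the Weierstrass functions `℘(·; ω₁,ω₂)` and `℘(·; ω₁,ω₃)`
are algebraically independent over `ℂ`. -/
theorem wp_algebraically_independent (ω₁ : ℂ) (h₁ : ω₁ ≠ 0) (hre : ω₁.re = 0)
    (ω₂ ω₃ : ℝ) (h₂ : 0 < ω₂) (h₃ : 0 < ω₃) (hirr : Irrational (ω₃ / ω₂)) :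
    ¬ ∃ P : MvPolynomial (Fin 2) ℂ, P ≠ 0 ∧
      ∀ ω : ℂ, ¬ inLattice ω₁ (ω₂ : ℂ) ω → ¬ inLattice ω₁ (ω₃ : ℂ) ω →
        MvPolynomial.eval ![wp ω₁ (ω₂ : ℂ) ω, wp ω₁ (ω₃ : ℂ) ω] P = 0 := by
  rintro ⟨P, hP0, hPvan⟩
  have hb : ω₁.im ≠ 0 := fun h => h₁ (Complex.ext hre h)
  set c₂ := min |ω₁.im| ω₂ with hc₂
  set c₃ := min |ω₁.im| ω₃ with hc₃
  have hc₂0 : 0 < c₂ := lt_min (abs_pos.mpr hb) h₂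
  have hc₃0 : 0 < c₃ := lt_min (abs_pos.mpr hb) h₃
  obtain ⟨C₂, hC₂0, hC₂⟩ := wp_lower_bound ω₁ h₁ hre ω₂ h₂
  obtain ⟨C₃, hC₃0, hC₃⟩ := wp_lower_bound ω₁ h₁ hre ω₃ h₃
  set ρ := min c₂ c₃ / 2 with hρ
  have hρ0 : 0 < ρ := div_pos (lt_min hc₂0 hc₃0) two_pos
  have hρc₂ : ρ ≤ c₂ / 2 := by
    have := min_le_left c₂ c₃; rw [hρ]; linarith
  have hρc₃ : ρ ≤ c₃ / 2 := by
    have := min_le_right c₂ c₃; rw [hρ]; linarith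
  have hc₂ω : c₂ ≤ ω₂ := min_le_right _ _
  have hc₃ω : c₃ ≤ ω₃ := min_le_right _ _
  have hρω₂ : ρ < ω₂ := by linarith
  have hρω₃ : ρ < ω₃ := by linarith
  set S : Polynomial (Polynomial ℂ) :=
    MvPolynomial.aeval (![Polynomial.C Polynomial.X, Polynomial.X] :
      Fin 2 → Polynomial (Polynomial ℂ)) P with hSdef
  have step1 : ∀ t : ℝ, 0 < t → t < ρ →
      (Polynomial.mapAlgHom (Polynomial.aeval (wp ω₁ (ω₂:ℂ) (t:ℂ)) : Polynomial ℂ →ₐ[ℂ] ℂ)) S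
        = 0 := by
    intro t ht0 htρ
    set x := wp ω₁ (ω₂:ℂ) (t:ℂ) with hx
    by_contra hQne
    have hfin : {y : ℂ | Polynomial.IsRoot
        ((Polynomial.mapAlgHom (Polynomial.aeval x : Polynomial ℂ →ₐ[ℂ] ℂ)) S) y}.Finite :=
      Polynomial.finite_setOf_isRoot hQne
    obtain ⟨M, hM⟩ := (hfin.image norm).bddAbove
    rw [mem_upperBounds] at hM
    set M' := max M 0 with hM'def
    have hM'0 : 0 ≤ M' := le_max_right _ _
    set B := M' + C₃ + 1 with hBdef
    have hB0 : 0 < B := by rw [hBdef]; linarith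
    set ε := min ρ (Real.sqrt B)⁻¹ with hεdef
    have hε0 : 0 < ε := lt_min hρ0 (by positivity)
    obtain ⟨a, b, hab1, hab2⟩ := dense_combination h₂ h₃ hirr (show -t < -t + ε by linarith)
    set w := t + ((a:ℝ) * ω₂ + (b:ℝ) * ω₃) with hwdef
    have hw0 : 0 < w := by rw [hwdef]; linarith
    have hwε : w < ε := by rw [hwdef]; linarith
    have hwρ : w < ρ := lt_of_lt_of_le hwε (min_le_left _ _)
    have hwsq : w ≤ (Real.sqrt B)⁻¹ := le_trans hwε.le (min_le_right _ _)
    have htlat2 : ¬ inLattice ω₁ (ω₂:ℂ) (t:ℂ) :=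
      real_not_inLattice ω₁ h₁ hre ω₂ h₂ ht0 (by linarith)
    have hwlat3 : ¬ inLattice ω₁ (ω₃:ℂ) (w:ℂ) :=
      real_not_inLattice ω₁ h₁ hre ω₃ h₃ hw0 (by linarith)
    set ζ : ℂ := (t : ℂ) + (a : ℂ) * (ω₂:ℂ) with hζdef
    have hζw : ζ = (w : ℂ) + ((-b : ℤ) : ℂ) * (ω₃:ℂ) := by
      rw [hζdef, hwdef]; push_cast; ring
    have hζ2 : ¬ inLattice ω₁ (ω₂:ℂ) ζ := fun hmem =>
      htlat2 ((inLattice_shift_iff ω₁ ω₂ (t:ℂ) a).mp hmem)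
    have hζ3 : ¬ inLattice ω₁ (ω₃:ℂ) ζ := by
      rw [hζw]
      exact fun hmem => hwlat3 ((inLattice_shift_iff ω₁ ω₃ (w:ℂ) (-b)).mp hmem)
    have hwp2 : wp ω₁ (ω₂:ℂ) ζ = x := wp_shift ω₁ h₁ hre ω₂ h₂ (t:ℂ) a
    have hwp3 : wp ω₁ (ω₃:ℂ) ζ = wp ω₁ (ω₃:ℂ) (w:ℂ) := by
      rw [hζw]; exact wp_shift ω₁ h₁ hre ω₃ h₃ (w:ℂ) (-b)
    have hv := hPvan ζ hζ2 hζ3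
    rw [hwp2, hwp3] at hv
    have hroot : Polynomial.IsRoot
        ((Polynomial.mapAlgHom (Polynomial.aeval x : Polynomial ℂ →ₐ[ℂ] ℂ)) S)
        (wp ω₁ (ω₃:ℂ) (w:ℂ)) := by
      show Polynomial.eval _ _ = 0
      rw [hSdef, hQdef P x, hEvalLem P x _]
      exact hv
    have hle : ‖wp ω₁ (ω₃:ℂ) (w:ℂ)‖ ≤ M' :=
      le_trans (hM _ ⟨_, hroot, rfl⟩) (le_max_left _ _)
    have hnw : ‖(w:ℂ)‖ = w := norm_ofReal_pos hw0
    have hlow := hC₃ (w:ℂ) (by exact_mod_cast hw0.ne')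
      (by rw [hnw]; change _ ≤ c₃ / 2; linarith)
    have hinv : B ≤ (‖(w:ℂ)‖ ^ 2)⁻¹ := by rw [hnw]; exact inv_sq_big hB0 hw0 hwsq
    have hfinal : M' + 1 ≤ ‖wp ω₁ (ω₃:ℂ) (w:ℂ)‖ := by
      have h5 : B - C₃ ≤ ‖wp ω₁ (ω₃:ℂ) (w:ℂ)‖ := by linarith
      rw [hBdef] at h5; linarith
    linarith
  have himg_inf : ((fun t : ℝ => wp ω₁ (ω₂:ℂ) (t:ℂ)) '' (Set.Ioo 0 ρ)).Infinite := by
    intro hfin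
    obtain ⟨M, hM⟩ := (hfin.image norm).bddAbove
    rw [mem_upperBounds] at hM
    set M' := max M 0 with hM'def
    have hM'0 : 0 ≤ M' := le_max_right _ _
    set B := M' + C₂ + 1 with hBdef
    have hB0 : 0 < B := by rw [hBdef]; linarith
    set t := min (ρ/2) (Real.sqrt B)⁻¹ with htdef
    have ht0 : 0 < t := lt_min (by linarith) (by positivity)
    have htρ : t < ρ := lt_of_le_of_lt (min_le_left _ _) (by linarith)
    have htmem : t ∈ Set.Ioo (0:ℝ) ρ := ⟨ht0, htρ⟩
    have hnt : ‖(t:ℂ)‖ = t := norm_ofReal_pos ht0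
    have hle : ‖wp ω₁ (ω₂:ℂ) (t:ℂ)‖ ≤ M' :=
      le_trans (hM _ ⟨_, ⟨t, htmem, rfl⟩, rfl⟩) (le_max_left _ _)
    have hlow := hC₂ (t:ℂ) (by exact_mod_cast ht0.ne')
      (by rw [hnt]; change _ ≤ c₂ / 2; linarith)
    have hinv : B ≤ (‖(t:ℂ)‖ ^ 2)⁻¹ := by
      rw [hnt]; exact inv_sq_big hB0 ht0 (min_le_right _ _)
    have hfinal : M' + 1 ≤ ‖wp ω₁ (ω₂:ℂ) (t:ℂ)‖ := by
      have h5 : B - C₂ ≤ ‖wp ω₁ (ω₂:ℂ) (t:ℂ)‖ := by linarith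
      rw [hBdef] at h5; linarith
    linarith
  have hcoeff : ∀ j : ℕ, S.coeff j = 0 := by
    intro j
    apply Polynomial.eq_zero_of_infinite_isRoot
    apply Set.Infinite.mono ?_ himg_inf
    rintro y ⟨t, htmem, rfl⟩
    show Polynomial.IsRoot _ _
    have h0 := step1 t htmem.1 htmem.2
    have h6 := congrArg (fun q : Polynomial ℂ => Polynomial.coeff q j) h0
    simp only [Polynomial.coeff_zero] at h6
    rw [Polynomial.coe_mapAlgHom, Polynomial.coeff_map] at h6
    have e1 : (Polynomial.aeval (wp ω₁ (ω₂:ℂ) (t:ℂ))) (S.coeff j)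
        = Polynomial.eval (wp ω₁ (ω₂:ℂ) (t:ℂ)) (S.coeff j) := by
      rw [Polynomial.aeval_def, Polynomial.eval₂_eq_eval_map, Algebra.algebraMap_self,
        Polynomial.map_id]
    show Polynomial.eval _ _ = 0
    rw [← e1]
    exact h6
  have hSzero : S = 0 := Polynomial.ext fun j => by rw [hcoeff j]; simp
  have hPzero : P = 0 := by
    apply MvPolynomial.funext (q := 0)
    intro v
    have hv2 : (![v 0, v 1] : Fin 2 → ℂ) = v := by
      funext i; fin_cases i <;> rfl
    have h4 : MvPolynomial.eval ![v 0, v 1] P = 0 := by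
      rw [← hEvalLem P (v 0) (v 1), ← hQdef P (v 0), ← hSdef, hSzero]
      simp
    rw [hv2] at h4
    rw [h4]
    simp
  exact hP0 hPzero
end

section
/- Let U ⊆ ℂ be a nonempty open connected set, g₂, g₃ ∈ ℂ, and let f : U → ℂ be a nonconstant holomorphic function satisfying f′(t)² = 4·f(t)³ − g₂·f(t) − g₃ for all t ∈ U. Then for every integer r ≥ 0 there exists a polynomial p_r ∈ ℂ[X] of degree r+1 with leading coefficient (2r+1)! such that the (2r)-th derivative of f satisfies f^{(2r)}(t) = p_r(f(t)) for all t ∈ U. -/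
open Polynomial in
private theorem poly_step_aux (g₂ g₃ : ℂ) (r : ℕ) (p : ℂ[X]) (hd : p.natDegree = r + 1)
    (hl : p.leadingCoeff = ((2 * r + 1).factorial : ℂ)) :
    (p.derivative.derivative * (4 * X ^ 3 - C g₂ * X - C g₃)
      + p.derivative * (6 * X ^ 2 - C (g₂ / 2))).natDegree = r + 1 + 1 ∧
    (p.derivative.derivative * (4 * X ^ 3 - C g₂ * X - C g₃)
      + p.derivative * (6 * X ^ 2 - C (g₂ / 2))).leadingCoeff
      = ((2 * (r + 1) + 1).factorial : ℂ) := by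
  set A : ℂ[X] := 4 * X ^ 3 - C g₂ * X - C g₃ with hA
  set B : ℂ[X] := 6 * X ^ 2 - C (g₂ / 2) with hB
  have hAd : A.natDegree ≤ 3 := by rw [hA]; compute_degree
  have hBd : B.natDegree ≤ 2 := by rw [hB]; compute_degree
  have hA3 : A.coeff 3 = 4 := by simp [hA, coeff_X_pow]
  have hB2 : B.coeff 2 = 6 := by simp [hB, coeff_X_pow]
  have hp1d : p.derivative.natDegree ≤ r := by
    simpa [hd] using p.natDegree_derivative_le
  have hp2d : p.derivative.derivative.natDegree ≤ r - 1 :=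
    le_trans p.derivative.natDegree_derivative_le (by omega)
  have hlead : p.coeff (r + 1) = ((2 * r + 1).factorial : ℂ) := by
    rwa [← hd, coeff_natDegree]
  have hp1c : p.derivative.coeff r = (r + 1 : ℂ) * ((2 * r + 1).factorial : ℂ) := by
    rw [coeff_derivative, hlead]; push_cast; ring
  have hcoeff : (p.derivative.derivative * A + p.derivative * B).coeff (r + 2)
      = ((2 * (r + 1) + 1).factorial : ℂ) := by
    rw [coeff_add]
    have h2 : (p.derivative * B).coeff (r + 2) = p.derivative.coeff r * B.coeff 2 :=
      coeff_mul_add_eq_of_natDegree_le hp1d hBd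
    rcases r with _ | s
    · have hz : p.derivative.derivative = 0 := by
        have : p.derivative.natDegree = 0 := le_antisymm hp1d (Nat.zero_le _)
        rw [p.derivative.eq_C_of_natDegree_eq_zero this, derivative_C]
      rw [hz]
      simp only [zero_mul, coeff_zero, zero_add, h2, hp1c, hB2]
      norm_num [Nat.factorial]
    · have h1 : (p.derivative.derivative * A).coeff (s + 1 + 2)
          = p.derivative.derivative.coeff s * A.coeff 3 :=
        coeff_mul_add_eq_of_natDegree_le (le_trans hp2d (by omega)) hAd
      have hp2c : p.derivative.derivative.coeff s
          = (s + 1 : ℂ) * ((s + 2 : ℂ)) * ((2 * (s + 1) + 1).factorial : ℂ) := by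
        rw [coeff_derivative, coeff_derivative, hlead]; push_cast; ring
      rw [h1, h2, hp2c, hp1c, hA3, hB2]
      have : (2 * (s + 1 + 1) + 1).factorial
          = (2 * (s + 1) + 3) * ((2 * (s + 1) + 2) * (2 * (s + 1) + 1).factorial) := by
        have e : 2 * (s + 1 + 1) + 1 = (2 * (s + 1) + 1) + 1 + 1 := by ring
        rw [e, Nat.factorial_succ, Nat.factorial_succ]
      rw [this]; push_cast; ring
  have hne : ((2 * (r + 1) + 1).factorial : ℂ) ≠ 0 :=
    Nat.cast_ne_zero.mpr (Nat.factorial_ne_zero _)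
  have hdegle : (p.derivative.derivative * A + p.derivative * B).natDegree ≤ r + 2 := by
    apply le_trans (natDegree_add_le _ _)
    apply max_le
    · rcases r with _ | s
      · have : p.derivative.natDegree = 0 := le_antisymm hp1d (Nat.zero_le _)
        rw [p.derivative.eq_C_of_natDegree_eq_zero this, derivative_C, zero_mul]
        simp
      · exact le_trans natDegree_mul_le (le_trans (add_le_add hp2d hAd) (by omega))
    · exact le_trans natDegree_mul_le (le_trans (add_le_add hp1d hBd) (by omega))
  have hdegge : r + 2 ≤ (p.derivative.derivative * A + p.derivative * B).natDegree :=
    le_natDegree_of_ne_zero (by rw [hcoeff]; exact hne)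
  have hdeg : (p.derivative.derivative * A + p.derivative * B).natDegree = r + 2 :=
    le_antisymm hdegle hdegge
  exact ⟨hdeg, by rw [leadingCoeff, hdeg, hcoeff]⟩

/-- Even-order derivatives of a solution of `f′² = 4f³ − g₂f − g₃` are polynomials
in `f`, with the `(2r)`-th derivative given by a polynomial of degree `r+1` and
leading coefficient `(2r+1)!`. -/
theorem even_iterated_deriv_poly (U : Set ℂ) (hUo : IsOpen U) (hUc : IsConnected U)
    (g₂ g₃ : ℂ) (f : ℂ → ℂ) (hf : DifferentiableOn ℂ f U)
    (hnc : ∃ a ∈ U, ∃ b ∈ U, f a ≠ f b)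
    (hode : ∀ t ∈ U, deriv f t ^ 2 = 4 * f t ^ 3 - g₂ * f t - g₃) :
    ∀ r : ℕ, ∃ p : Polynomial ℂ,
      p.natDegree = r + 1 ∧
      p.leadingCoeff = ((2 * r + 1).factorial : ℂ) ∧
      ∀ t ∈ U, iteratedDeriv (2 * r) f t = p.eval (f t) := by
  have hUp : IsPreconnected U := hUc.isPreconnected
  have hfa : AnalyticOnNhd ℂ f U := hf.analyticOnNhd hUo
  have hf'a : AnalyticOnNhd ℂ (deriv f) U := hfa.deriv_of_isOpen hUo
  have hdf : ∀ t ∈ U, DifferentiableAt ℂ f t :=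
    fun t ht => hf.differentiableAt (hUo.mem_nhds ht)
  have hdf' : ∀ t ∈ U, DifferentiableAt ℂ (deriv f) t :=
    fun t ht => (hf'a t ht).differentiableAt
  -- differentiate the ODE
  have hkey : ∀ t ∈ U, deriv f t * (deriv (deriv f) t - (6 * f t ^ 2 - g₂ / 2)) = 0 := by
    intro t ht
    have h1 : HasDerivAt (fun s => deriv f s ^ 2)
        (2 * deriv f t * deriv (deriv f) t) t := by
      simpa [mul_comm] using ((hdf' t ht).hasDerivAt.fun_pow 2)
    have hft := (hdf t ht).hasDerivAt
    have h2 := (((hft.pow 3).const_mul 4).sub (hft.const_mul g₂)).sub_const g₃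
    have heq : (fun s => deriv f s ^ 2)
        =ᶠ[nhds t] (fun s => 4 * f s ^ 3 - g₂ * f s - g₃) :=
      Filter.eventuallyEq_of_mem (hUo.mem_nhds ht) hode
    have h1' : HasDerivAt (fun s => 4 * f s ^ 3 - g₂ * f s - g₃)
        (2 * deriv f t * deriv (deriv f) t) t := h1.congr_of_eventuallyEq heq.symm
    have huniq := h1'.unique h2
    push_cast at huniq
    linear_combination huniq / 2
  -- f' is not identically zero
  obtain ⟨a, ha, b, hb, hab⟩ := hnc
  have hexists : ∃ z₀ ∈ U, deriv f z₀ ≠ 0 := by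
    by_contra hcon
    push_neg at hcon
    obtain ⟨ε, hε, hball⟩ := Metric.isOpen_iff.mp hUo a ha
    have hconst : ∀ x ∈ Metric.ball a ε, f x = f a := by
      intro x hx
      refine (convex_ball a ε).is_const_of_fderivWithin_eq_zero
        (hf.mono hball) ?_ hx (Metric.mem_ball_self hε)
      intro y hy
      rw [fderivWithin_of_isOpen Metric.isOpen_ball hy]
      have hzero : HasDerivAt f 0 y := by
        have := (hdf y (hball hy)).hasDerivAt
        rwa [hcon y (hball hy)] at this
      have : HasFDerivAt f (0 : ℂ →L[ℂ] ℂ) y := by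
        simpa using hzero.hasFDerivAt
      exact this.fderiv
    have hga : AnalyticOnNhd ℂ (fun z => f z - f a) U := hfa.sub analyticOnNhd_const
    have hev : (fun z => f z - f a) =ᶠ[nhds a] 0 := by
      filter_upwards [Metric.ball_mem_nhds a hε] with x hx
      simp [hconst x hx]
    have h0 := hga.eqOn_zero_of_preconnected_of_eventuallyEq_zero hUp ha hev hb
    exact hab (sub_eq_zero.mp h0).symm
  -- identity theorem: f'' = 6 f² - g₂/2 on U
  obtain ⟨z₀, hz₀, hz₀ne⟩ := hexists
  have hha : AnalyticOnNhd ℂ (fun z => deriv (deriv f) z - (6 * f z ^ 2 - g₂ / 2)) U := by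
    exact (hf'a.deriv_of_isOpen hUo).sub
      ((analyticOnNhd_const.mul (hfa.pow 2)).sub analyticOnNhd_const)
  have hev0 : (fun z => deriv (deriv f) z - (6 * f z ^ 2 - g₂ / 2)) =ᶠ[nhds z₀] 0 := by
    have hcont : ContinuousAt (deriv f) z₀ := (hf'a z₀ hz₀).continuousAt
    filter_upwards [hcont.eventually_ne hz₀ne, hUo.mem_nhds hz₀] with z hz hzU
    have := hkey z hzU
    rcases mul_eq_zero.mp this with h | h
    · exact absurd h hz
    · exact h
  have hEqOn := hha.eqOn_zero_of_preconnected_of_eventuallyEq_zero hUp hz₀ hev0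
  have hf'' : ∀ t ∈ U, deriv (deriv f) t = 6 * f t ^ 2 - g₂ / 2 := by
    intro t ht
    have := hEqOn ht
    simpa [sub_eq_zero] using this
  -- induction
  intro r
  induction r with
  | zero =>
    refine ⟨Polynomial.X, Polynomial.natDegree_X, ?_, ?_⟩
    · simp [Polynomial.leadingCoeff_X]
    · intro t ht; simp
  | succ r ih =>
    obtain ⟨p, hd, hl, hev⟩ := ih
    obtain ⟨hqd, hql⟩ := poly_step_aux g₂ g₃ r p hd hl
    refine ⟨p.derivative.derivative * (4 * Polynomial.X ^ 3 - Polynomial.C g₂ * Polynomial.X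
        - Polynomial.C g₃) + p.derivative * (6 * Polynomial.X ^ 2 - Polynomial.C (g₂ / 2)),
      hqd, hql, ?_⟩
    have hstep1 : ∀ t ∈ U, deriv (iteratedDeriv (2 * r) f) t
        = p.derivative.eval (f t) * deriv f t := by
      intro t ht
      have heq : iteratedDeriv (2 * r) f =ᶠ[nhds t] fun s => p.eval (f s) :=
        Filter.eventuallyEq_of_mem (hUo.mem_nhds ht) hev
      rw [heq.deriv_eq]
      have h1 : HasDerivAt (fun s => p.eval (f s))
          (p.derivative.eval (f t) * deriv f t) t :=
        (p.hasDerivAt (f t)).comp t (hdf t ht).hasDerivAt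
      exact h1.deriv
    intro t ht
    have e2 : 2 * (r + 1) = (2 * r + 1) + 1 := by ring
    rw [e2, iteratedDeriv_succ, iteratedDeriv_succ]
    have heq2 : deriv (iteratedDeriv (2 * r) f)
        =ᶠ[nhds t] fun s => p.derivative.eval (f s) * deriv f s :=
      Filter.eventuallyEq_of_mem (hUo.mem_nhds ht) hstep1
    rw [heq2.deriv_eq]
    have hd1 : HasDerivAt (fun s => p.derivative.eval (f s))
        (p.derivative.derivative.eval (f t) * deriv f t) t :=
      (p.derivative.hasDerivAt (f t)).comp t (hdf t ht).hasDerivAt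
    have hd2 : HasDerivAt (deriv f) (deriv (deriv f) t) t := (hdf' t ht).hasDerivAt
    rw [(hd1.fun_mul hd2).deriv, hf'' t ht]
    have hο := hode t ht
    simp only [Polynomial.eval_add, Polynomial.eval_mul, Polynomial.eval_sub,
      Polynomial.eval_pow, Polynomial.eval_C, Polynomial.eval_X, Polynomial.eval_ofNat]
    linear_combination p.derivative.derivative.eval (f t) * hο
end
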